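/- arXiv:2111.05030 — 4 statements merged into one kernel-verified Lean document; each statement's English description precedes it below -/
import Mathlib

section
/- For every r̃ ∈ ℕ and every r₀ ∈ {0,…,b−1}, Var(μ^(b·r̃+r₀)) = ((b−r₀)/b)·Var(μ^(r̃)) + (r₀/b)·Var(μ^(r̃+1)) + r₀·(b−r₀). -/
open Filter Topology MeasureTheory

noncomputable section

/-- Sum of the base-`b` digits of `n`. -/
def digitSum (b n : ℕ) : ℕ := (Nat.digits b n).sum

/-- `Δ^(r)(n) = s(n+r) - s(n)`, the variation of the base-`b` digit sum when adding `r`. -/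
def delta (b r n : ℕ) : ℤ := (digitSum b (n + r) : ℤ) - (digitSum b n : ℤ)

/-! ### Auxiliary lemmas -/

lemma digitSum_mul_add {b : ℕ} (hb : 2 ≤ b) (m c : ℕ) (hc : c < b) :
    digitSum b (b * m + c) = digitSum b m + c := by
  rcases Nat.eq_zero_or_pos (b * m + c) with h | h
  · have h1 : b * m = 0 ∧ c = 0 := by omega
    have hm : m = 0 := by
      rcases Nat.mul_eq_zero.mp h1.1 with h' | h' <;> omega
    simp [hm, h1.2, digitSum]
  · rw [digitSum, Nat.digits_def' (by omega : 1 < b) h]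
    have h2 : (b * m + c) % b = c := by
      rw [Nat.mul_add_mod, Nat.mod_eq_of_lt hc]
    have h3 : (b * m + c) / b = m := by
      rw [Nat.mul_add_div (by omega), Nat.div_eq_of_lt hc, Nat.add_zero]
    rw [List.sum_cons, h2, h3]
    simp [digitSum]
    omega

lemma delta_lt {b rt r0 m n0 : ℕ} (hb : 2 ≤ b) (hn0 : n0 < b) (hlt : n0 + r0 < b) :
    delta b (b * rt + r0) (b * m + n0) = delta b rt m + r0 := by
  have key : b * m + n0 + (b * rt + r0) = b * (m + rt) + (n0 + r0) := by ring
  rw [delta, key, digitSum_mul_add hb _ _ hlt, digitSum_mul_add hb _ _ hn0, delta]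
  push_cast
  ring

lemma delta_ge {b rt r0 m n0 : ℕ} (hb : 2 ≤ b) (hn0 : n0 < b) (hr0 : r0 < b)
    (hge : b ≤ n0 + r0) :
    delta b (b * rt + r0) (b * m + n0) = delta b (rt + 1) m + r0 - b := by
  have key : b * m + n0 + (b * rt + r0) = b * (m + (rt + 1)) + (n0 + r0 - b) := by
    have : b * (m + (rt + 1)) = b * m + b * rt + b := by ring
    omega
  have hlt : n0 + r0 - b < b := by omega
  rw [delta, key, digitSum_mul_add hb _ _ hlt, digitSum_mul_add hb _ _ hn0, delta]
  have : ((n0 + r0 - b : ℕ) : ℤ) = (n0 : ℤ) + r0 - b := by omega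
  push_cast [this]
  ring

lemma delta_zero (b n : ℕ) : delta b 0 n = 0 := by simp [delta]

lemma sum_range_mul {β : Type*} [AddCommMonoid β] (f : ℕ → β) (b M : ℕ) :
    ∑ n ∈ Finset.range (b * M), f n
      = ∑ m ∈ Finset.range M, ∑ j ∈ Finset.range b, f (b * m + j) := by
  induction M with
  | zero => simp
  | succ M ih =>
    rw [Nat.mul_succ, Finset.sum_range_add, ih, Finset.sum_range_succ]

lemma count_decomp {b : ℕ} (hb : 2 ≤ b) (rt r0 : ℕ) (hr0 : r0 < b) (d : ℤ) (M : ℕ) :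
    ((Finset.range (b * M)).filter fun n => delta b (b * rt + r0) n = d).card
      = (b - r0) * ((Finset.range M).filter fun m => delta b rt m = d - r0).card
        + r0 * ((Finset.range M).filter fun m => delta b (rt + 1) m = d - r0 + b).card := by
  classical
  rw [Finset.card_filter, Finset.card_filter, Finset.card_filter, sum_range_mul]
  rw [Finset.mul_sum, Finset.mul_sum, ← Finset.sum_add_distrib]
  refine Finset.sum_congr rfl (fun m _ => ?_)
  have inner : ∀ j ∈ Finset.range b,
      (if delta b (b * rt + r0) (b * m + j) = d then 1 else 0)
        = (if j + r0 < b then (if delta b rt m = d - r0 then 1 else 0)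
            else (if delta b (rt + 1) m = d - r0 + b then 1 else 0)) := by
    intro j hj
    rw [Finset.mem_range] at hj
    by_cases hc : j + r0 < b
    · rw [if_pos hc, delta_lt hb hj hc]
      split <;> split <;> omega
    · rw [if_neg hc, delta_ge hb hj hr0 (by omega)]
      split <;> split <;> omega
  rw [Finset.sum_congr rfl inner, Finset.sum_ite]
  have h1 : (Finset.range b).filter (fun j => j + r0 < b) = Finset.range (b - r0) := by
    ext j; simp [Finset.mem_filter, Finset.mem_range]; omega
  have h2 : ((Finset.range b).filter (fun j => ¬ j + r0 < b)).card = r0 := by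
    have := Finset.card_filter_add_card_filter_not
      (s := Finset.range b) (p := fun j => j + r0 < b)
    rw [h1] at this
    simp [Finset.card_range] at this ⊢
    omega
  rw [Finset.sum_const, Finset.sum_const, h1, h2, Finset.card_range]
  simp [smul_eq_mul]

lemma mu_rec {b : ℕ} (hb : 2 ≤ b) (μ : ℕ → ℤ → ℝ)
    (hμ : ∀ (r : ℕ) (d : ℤ),
      Tendsto (fun N : ℕ =>
        (((Finset.range N).filter fun n => delta b r n = d).card : ℝ) / N)
        atTop (𝓝 (μ r d)))
    (rt r0 : ℕ) (hr0 : r0 < b) (d : ℤ) :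
    μ (b * rt + r0) d
      = (((b : ℝ) - r0) / b) * μ rt (d - r0)
        + ((r0 : ℝ) / b) * μ (rt + 1) (d - r0 + b) := by
  have hbM : Tendsto (fun M : ℕ => b * M) atTop atTop :=
    tendsto_atTop_mono (fun M => Nat.le_mul_of_pos_left M (by omega)) tendsto_id
  have h1 := (hμ (b * rt + r0) d).comp hbM
  have h2 : Tendsto (fun M : ℕ =>
      (((b : ℝ) - r0) / b) *
        ((((Finset.range M).filter fun m => delta b rt m = d - r0).card : ℝ) / M)
      + ((r0 : ℝ) / b) *
        ((((Finset.range M).filter fun m => delta b (rt + 1) m = d - r0 + b).card : ℝ) / M))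
      atTop (𝓝 ((((b : ℝ) - r0) / b) * μ rt (d - r0)
        + ((r0 : ℝ) / b) * μ (rt + 1) (d - r0 + b))) :=
    ((hμ rt (d - r0)).const_mul _).add ((hμ (rt + 1) (d - r0 + b)).const_mul _)
  have heq : (fun M : ℕ =>
      (((Finset.range (b * M)).filter fun n => delta b (b * rt + r0) n = d).card : ℝ)
        / ((b * M : ℕ) : ℝ))
      = (fun M : ℕ =>
      (((b : ℝ) - r0) / b) *
        ((((Finset.range M).filter fun m => delta b rt m = d - r0).card : ℝ) / M)
      + ((r0 : ℝ) / b) *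
        ((((Finset.range M).filter fun m => delta b (rt + 1) m = d - r0 + b).card : ℝ) / M)) := by
    funext M
    rcases Nat.eq_zero_or_pos M with hM | hM
    · simp [hM]
    rw [count_decomp hb rt r0 hr0 d M]
    have hbne : (b : ℝ) ≠ 0 := by positivity
    have hMne : (M : ℝ) ≠ 0 := Nat.cast_ne_zero.mpr (by omega)
    push_cast [Nat.cast_sub hr0.le]
    field_simp
  refine tendsto_nhds_unique ?_ h2
  rw [← heq]
  exact h1

lemma mu_nonneg {b : ℕ} (μ : ℕ → ℤ → ℝ)
    (hμ : ∀ (r : ℕ) (d : ℤ),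
      Tendsto (fun N : ℕ =>
        (((Finset.range N).filter fun n => delta b r n = d).card : ℝ) / N)
        atTop (𝓝 (μ r d)))
    (r : ℕ) (d : ℤ) : 0 ≤ μ r d :=
  ge_of_tendsto' (hμ r d) (fun N => by positivity)

lemma abs_le_sq (d : ℤ) : |(d : ℝ)| ≤ (d : ℝ) ^ 2 := by
  rcases eq_or_ne d 0 with h | h
  · simp [h]
  · have h1 : (1 : ℤ) ≤ |d| := Int.one_le_abs (by omega)
    have h1' : (1 : ℝ) ≤ |(d : ℝ)| := by
      rw [← Int.cast_abs]; exact_mod_cast h1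
    nlinarith [abs_nonneg (d : ℝ), sq_abs (d : ℝ)]

lemma summable_id_mu (μ : ℤ → ℝ) (hnn : ∀ d, 0 ≤ μ d)
    (h2 : Summable (fun d : ℤ => (d : ℝ) ^ 2 * μ d)) :
    Summable (fun d : ℤ => (d : ℝ) * μ d) := by
  rw [← summable_abs_iff]
  refine Summable.of_nonneg_of_le (fun d => abs_nonneg _) (fun d => ?_) h2
  rw [abs_mul, abs_of_nonneg (hnn d)]
  exact mul_le_mul_of_nonneg_right (abs_le_sq d) (hnn d)

lemma summable_mu (μ : ℤ → ℝ) (hnn : ∀ d, 0 ≤ μ d)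
    (h2 : Summable (fun d : ℤ => (d : ℝ) ^ 2 * μ d)) :
    Summable μ := by
  have hspike : Summable (fun d : ℤ => if d = 0 then μ 0 else 0) :=
    summable_of_ne_finset_zero (s := {(0 : ℤ)}) (by intro d hd; simp at hd ⊢; omega)
  refine Summable.of_nonneg_of_le hnn (fun d => ?_) (h2.add hspike)
  by_cases hd : d = 0
  · subst hd; simp
  · simp only [if_neg hd]
    have h1 : (1 : ℝ) ≤ (d : ℝ) ^ 2 := le_trans (by
      have := abs_le_sq d
      have h1 : (1 : ℤ) ≤ |d| := Int.one_le_abs (by omega)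
      have h1' : (1 : ℝ) ≤ |(d : ℝ)| := by rw [← Int.cast_abs]; exact_mod_cast h1
      linarith) (le_refl _)
    nlinarith [hnn d]

lemma tsum_shift0 (g : ℤ → ℝ) (c : ℤ) :
    ∑' d : ℤ, g (d - c) = ∑' d : ℤ, g d := by
  have := (Equiv.addRight c).tsum_eq (f := fun d : ℤ => g (d - c))
  rw [← this]
  simp

lemma summable_shift (g : ℤ → ℝ) (c : ℤ) (hg : Summable g) :
    Summable (fun d : ℤ => g (d - c)) := by
  have := (Equiv.subRight c).summable_iff (f := g)
  exact this.mpr hg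

lemma summable_shift1 (g : ℤ → ℝ) (c : ℤ) (h0 : Summable g)
    (h1 : Summable (fun d : ℤ => (d : ℝ) * g d)) :
    Summable (fun d : ℤ => (d : ℝ) * g (d - c)) := by
  have heq : (fun d : ℤ => (d : ℝ) * g (d - c)) ∘ (Equiv.addRight c)
      = fun e : ℤ => (e : ℝ) * g e + (c : ℝ) * g e := by
    funext e
    simp [Equiv.addRight]
    ring
  have : Summable ((fun d : ℤ => (d : ℝ) * g (d - c)) ∘ (Equiv.addRight c)) := by
    rw [heq]; exact h1.add (h0.mul_left _)
  rwa [(Equiv.addRight c).summable_iff] at this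

lemma tsum_shift1 (g : ℤ → ℝ) (c : ℤ) (h0 : Summable g)
    (h1 : Summable (fun d : ℤ => (d : ℝ) * g d)) :
    ∑' d : ℤ, (d : ℝ) * g (d - c)
      = (∑' d : ℤ, (d : ℝ) * g d) + c * ∑' d : ℤ, g d := by
  rw [← (Equiv.addRight c).tsum_eq (f := fun d : ℤ => (d : ℝ) * g (d - c))]
  have heq : ∀ e : ℤ, (((Equiv.addRight c) e : ℤ) : ℝ) * g ((Equiv.addRight c) e - c)
      = (e : ℝ) * g e + (c : ℝ) * g e := by
    intro e; simp [Equiv.addRight]; ring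
  rw [tsum_congr heq, Summable.tsum_add h1 (h0.mul_left _), tsum_mul_left]

lemma summable_shift2 (g : ℤ → ℝ) (c : ℤ) (h0 : Summable g)
    (h1 : Summable (fun d : ℤ => (d : ℝ) * g d))
    (h2 : Summable (fun d : ℤ => (d : ℝ) ^ 2 * g d)) :
    Summable (fun d : ℤ => (d : ℝ) ^ 2 * g (d - c)) := by
  have heq : (fun d : ℤ => (d : ℝ) ^ 2 * g (d - c)) ∘ (Equiv.addRight c)
      = fun e : ℤ => (e : ℝ) ^ 2 * g e + ((2 * c : ℝ) * ((e : ℝ) * g e) + (c : ℝ) ^ 2 * g e) := by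
    funext e
    simp [Equiv.addRight]
    ring
  have : Summable ((fun d : ℤ => (d : ℝ) ^ 2 * g (d - c)) ∘ (Equiv.addRight c)) := by
    rw [heq]; exact h2.add ((h1.mul_left _).add (h0.mul_left _))
  rwa [(Equiv.addRight c).summable_iff] at this

lemma tsum_shift2 (g : ℤ → ℝ) (c : ℤ) (h0 : Summable g)
    (h1 : Summable (fun d : ℤ => (d : ℝ) * g d))
    (h2 : Summable (fun d : ℤ => (d : ℝ) ^ 2 * g d)) :
    ∑' d : ℤ, (d : ℝ) ^ 2 * g (d - c)
      = (∑' d : ℤ, (d : ℝ) ^ 2 * g d) + 2 * c * (∑' d : ℤ, (d : ℝ) * g d)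
        + c ^ 2 * ∑' d : ℤ, g d := by
  rw [← (Equiv.addRight c).tsum_eq (f := fun d : ℤ => (d : ℝ) ^ 2 * g (d - c))]
  have heq : ∀ e : ℤ, (((Equiv.addRight c) e : ℤ) : ℝ) ^ 2 * g ((Equiv.addRight c) e - c)
      = (e : ℝ) ^ 2 * g e + ((2 * c : ℝ) * ((e : ℝ) * g e) + (c : ℝ) ^ 2 * g e) := by
    intro e; simp [Equiv.addRight]; ring
  rw [tsum_congr heq, Summable.tsum_add h2 ((h1.mul_left _).add (h0.mul_left _)),
    Summable.tsum_add (h1.mul_left _) (h0.mul_left _), tsum_mul_left, tsum_mul_left]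
  ring

lemma mu_zero {b : ℕ} (μ : ℕ → ℤ → ℝ)
    (hμ : ∀ (r : ℕ) (d : ℤ),
      Tendsto (fun N : ℕ =>
        (((Finset.range N).filter fun n => delta b r n = d).card : ℝ) / N)
        atTop (𝓝 (μ r d)))
    (d : ℤ) : μ 0 d = if d = 0 then 1 else 0 := by
  by_cases hd : d = 0
  · subst hd
    rw [if_pos rfl]
    refine tendsto_nhds_unique ((hμ 0 0).congr' ?_) tendsto_const_nhds
    filter_upwards [eventually_ge_atTop 1] with N hN
    have : ((Finset.range N).filter fun n => delta b 0 n = 0) = Finset.range N := by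
      refine Finset.filter_true_of_mem (fun n _ => delta_zero b n)
    rw [this, Finset.card_range, div_self (by positivity)]
  · rw [if_neg hd]
    refine tendsto_nhds_unique ((hμ 0 d).congr' ?_) tendsto_const_nhds
    filter_upwards with N
    have : ((Finset.range N).filter fun n => delta b 0 n = d) = ∅ := by
      refine Finset.filter_false_of_mem (fun n _ => by rw [delta_zero]; omega)
    rw [this]
    simp

lemma tsum_mu_zero {b : ℕ} (μ : ℕ → ℤ → ℝ)
    (hμ : ∀ (r : ℕ) (d : ℤ),
      Tendsto (fun N : ℕ =>
        (((Finset.range N).filter fun n => delta b r n = d).card : ℝ) / N)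
        atTop (𝓝 (μ r d))) :
    ∑' d : ℤ, μ 0 d = 1 := by
  rw [tsum_eq_single (0 : ℤ) (fun d hd => by rw [mu_zero μ hμ d, if_neg hd]),
    mu_zero μ hμ 0, if_pos rfl]

lemma tsum_id_mu_zero {b : ℕ} (μ : ℕ → ℤ → ℝ)
    (hμ : ∀ (r : ℕ) (d : ℤ),
      Tendsto (fun N : ℕ =>
        (((Finset.range N).filter fun n => delta b r n = d).card : ℝ) / N)
        atTop (𝓝 (μ r d))) :
    ∑' d : ℤ, (d : ℝ) * μ 0 d = 0 := by
  have : ∀ d : ℤ, (d : ℝ) * μ 0 d = 0 := by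
    intro d
    by_cases hd : d = 0
    · subst hd; simp
    · rw [mu_zero μ hμ d, if_neg hd, mul_zero]
  rw [tsum_congr this, tsum_zero]

section
variable {b : ℕ} (hb : 2 ≤ b) (μ : ℕ → ℤ → ℝ)
variable (hrec : ∀ (rt r0 : ℕ), r0 < b → ∀ d : ℤ,
    μ (b * rt + r0) d
      = (((b : ℝ) - r0) / b) * μ rt (d - r0)
        + ((r0 : ℝ) / b) * μ (rt + 1) (d - r0 + b))
variable (h0 : ∀ r, Summable (μ r)) (h1 : ∀ r, Summable (fun d : ℤ => (d : ℝ) * μ r d))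
variable (hmu0 : ∑' d : ℤ, μ 0 d = 1) (hid0 : ∑' d : ℤ, (d : ℝ) * μ 0 d = 0)

include hrec h0 in
lemma S_rec (rt r0 : ℕ) (hr0 : r0 < b) :
    ∑' d : ℤ, μ (b * rt + r0) d
      = (((b : ℝ) - r0) / b) * (∑' d : ℤ, μ rt d)
        + ((r0 : ℝ) / b) * ∑' d : ℤ, μ (rt + 1) d := by
  have key : ∀ d : ℤ, μ (b * rt + r0) d
      = (((b : ℝ) - r0) / b) * μ rt (d - r0)
        + ((r0 : ℝ) / b) * μ (rt + 1) (d - ((r0 : ℤ) - b)) := by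
    intro d
    rw [hrec rt r0 hr0 d]
    ring_nf
  rw [tsum_congr key,
    Summable.tsum_add ((summable_shift _ _ (h0 rt)).mul_left _)
      ((summable_shift _ _ (h0 (rt + 1))).mul_left _),
    tsum_mul_left, tsum_mul_left, tsum_shift0, tsum_shift0]

include hb hrec h0 hmu0 in
lemma S_one : ∀ r, ∑' d : ℤ, μ r d = 1 := by
  intro r
  induction r using Nat.strong_induction_on with
  | _ r ih =>
  rcases Nat.eq_zero_or_pos r with hr | hr
  · subst hr; exact hmu0
  have hbpos : 0 < b := by omega
  have hbR : (b : ℝ) ≠ 0 := by positivity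
  set t := r / b with htdef
  set a := r % b with hadef
  have hab : a < b := Nat.mod_lt _ hbpos
  have ht : b * t + a = r := Nat.div_add_mod r b
  have hrec' := S_rec μ hrec h0 t a hab
  rw [ht] at hrec'
  rcases eq_or_lt_of_le (show 1 ≤ r from hr) with hr1 | hr2
  · -- r = 1
    have ht0 : t = 0 := by rw [htdef, ← hr1]; exact Nat.div_eq_of_lt (by omega)
    have ha1 : a = 1 := by rw [hadef, ← hr1]; exact Nat.mod_eq_of_lt (by omega)
    rw [ht0, ha1, ← hr1] at hrec'
    rw [hmu0] at hrec'
    norm_num at hrec'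
    have hb2 : (2 : ℝ) ≤ b := by exact_mod_cast hb
    set x := ∑' d : ℤ, μ 1 d with hx
    have h2 : x * (b : ℝ) = ((b : ℝ) - 1) + x := by
      field_simp at hrec'
      linarith
    have key : x * ((b : ℝ) - 1) = 1 * ((b : ℝ) - 1) := by ring_nf; linarith
    have := mul_right_cancel₀ (by linarith : (b : ℝ) - 1 ≠ 0) key
    rw [← hr1]
    simpa using this
  · -- r ≥ 2
    have htlt : t < r := Nat.div_lt_self (by omega) (by omega)
    by_cases ha : a = 0
    · rw [ha] at hrec'
      rw [ih t htlt] at hrec'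
      rw [hrec']
      push_cast
      field_simp
      ring
    · have h2t : 2 * t ≤ b * t := Nat.mul_le_mul_right t hb
      have htlt1 : t + 1 < r := by
        obtain ⟨p, hp1, hp2⟩ : ∃ p, p = b * t ∧ 2 * t ≤ p := ⟨b * t, rfl, h2t⟩
        omega
      rw [ih t htlt, ih (t + 1) htlt1] at hrec'
      rw [hrec']
      field_simp
      ring

include hrec h0 h1 in
lemma E_rec (hS : ∀ r, ∑' d : ℤ, μ r d = 1) (rt r0 : ℕ) (hr0 : r0 < b) :
    ∑' d : ℤ, (d : ℝ) * μ (b * rt + r0) d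
      = (((b : ℝ) - r0) / b) * ((∑' d : ℤ, (d : ℝ) * μ rt d) + r0)
        + ((r0 : ℝ) / b) * ((∑' d : ℤ, (d : ℝ) * μ (rt + 1) d) + r0 - b) := by
  have key : ∀ d : ℤ, (d : ℝ) * μ (b * rt + r0) d
      = (((b : ℝ) - r0) / b) * ((d : ℝ) * μ rt (d - r0))
        + ((r0 : ℝ) / b) * ((d : ℝ) * μ (rt + 1) (d - ((r0 : ℤ) - b))) := by
    intro d
    rw [hrec rt r0 hr0 d]
    ring_nf
  rw [tsum_congr key,
    Summable.tsum_add ((summable_shift1 _ _ (h0 rt) (h1 rt)).mul_left _)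
      ((summable_shift1 _ _ (h0 (rt + 1)) (h1 (rt + 1))).mul_left _),
    tsum_mul_left, tsum_mul_left,
    tsum_shift1 _ _ (h0 rt) (h1 rt), tsum_shift1 _ _ (h0 (rt + 1)) (h1 (rt + 1)),
    hS rt, hS (rt + 1)]
  push_cast
  ring

include hb hrec h0 h1 hid0 in
lemma E_zero (hS : ∀ r, ∑' d : ℤ, μ r d = 1) :
    ∀ r, ∑' d : ℤ, (d : ℝ) * μ r d = 0 := by
  intro r
  induction r using Nat.strong_induction_on with
  | _ r ih =>
  rcases Nat.eq_zero_or_pos r with hr | hr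
  · subst hr; exact hid0
  have hbpos : 0 < b := by omega
  have hbR : (b : ℝ) ≠ 0 := by positivity
  set t := r / b with htdef
  set a := r % b with hadef
  have hab : a < b := Nat.mod_lt _ hbpos
  have ht : b * t + a = r := Nat.div_add_mod r b
  have hrec' := E_rec μ hrec h0 h1 hS t a hab
  rw [ht] at hrec'
  rcases eq_or_lt_of_le (show 1 ≤ r from hr) with hr1 | hr2
  · -- r = 1
    have ht0 : t = 0 := by rw [htdef, ← hr1]; exact Nat.div_eq_of_lt (by omega)
    have ha1 : a = 1 := by rw [hadef, ← hr1]; exact Nat.mod_eq_of_lt (by omega)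
    rw [ht0, ha1, ← hr1] at hrec'
    rw [hid0] at hrec'
    norm_num at hrec'
    have hb2 : (2 : ℝ) ≤ b := by exact_mod_cast hb
    set x := ∑' d : ℤ, (d : ℝ) * μ 1 d with hx
    have h2 : x * (b : ℝ) = ((b : ℝ) - 1) + (x + 1 - b) := by
      field_simp at hrec'
      linarith
    have key : x * ((b : ℝ) - 1) = 0 * ((b : ℝ) - 1) := by ring_nf; linarith
    have := mul_right_cancel₀ (by linarith : (b : ℝ) - 1 ≠ 0) key
    rw [← hr1]
    simpa using this
  · -- r ≥ 2
    have htlt : t < r := Nat.div_lt_self (by omega) (by omega)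
    by_cases ha : a = 0
    · rw [ha] at hrec'
      rw [ih t htlt] at hrec'
      rw [hrec']
      push_cast
      field_simp
      ring
    · have h2t : 2 * t ≤ b * t := Nat.mul_le_mul_right t hb
      have htlt1 : t + 1 < r := by
        obtain ⟨p, hp1, hp2⟩ : ∃ p, p = b * t ∧ 2 * t ≤ p := ⟨b * t, rfl, h2t⟩
        omega
      rw [ih t htlt, ih (t + 1) htlt1] at hrec'
      rw [hrec']
      field_simp
      ring

end

/-- **Lemma (inductive relation on the variance).** For every `r̃ ∈ ℕ` and every digit
`r₀ ∈ {0,…,b-1}`,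
`Var(μ^(b·r̃+r₀)) = ((b-r₀)/b)·Var(μ^(r̃)) + (r₀/b)·Var(μ^(r̃+1)) + r₀·(b-r₀)`. -/
theorem variance_recurrence (b : ℕ) (hb : 2 ≤ b)
    (μ : ℕ → ℤ → ℝ)
    (hμ : ∀ (r : ℕ) (d : ℤ),
      Tendsto (fun N : ℕ =>
        (((Finset.range N).filter fun n => delta b r n = d).card : ℝ) / N)
        atTop (𝓝 (μ r d)))
    (V : ℕ → ℝ)
    (hV : ∀ r : ℕ, HasSum (fun d : ℤ => (d : ℝ) ^ 2 * μ r d) (V r))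
    (rt : ℕ) (r0 : ℕ) (hr0 : r0 < b) :
    V (b * rt + r0) =
      (((b : ℝ) - r0) / b) * V rt + ((r0 : ℝ) / b) * V (rt + 1) +
        (r0 : ℝ) * ((b : ℝ) - r0) := by
  have hnn : ∀ r d, 0 ≤ μ r d := mu_nonneg μ hμ
  have h2 : ∀ r, Summable (fun d : ℤ => (d : ℝ) ^ 2 * μ r d) := fun r => (hV r).summable
  have h0 : ∀ r, Summable (μ r) := fun r => summable_mu (μ r) (hnn r) (h2 r)
  have h1 : ∀ r, Summable (fun d : ℤ => (d : ℝ) * μ r d) :=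
    fun r => summable_id_mu (μ r) (hnn r) (h2 r)
  have hrec := mu_rec hb μ hμ
  have hS : ∀ r, ∑' d : ℤ, μ r d = 1 := S_one hb μ hrec h0 (tsum_mu_zero μ hμ)
  have hE : ∀ r, ∑' d : ℤ, (d : ℝ) * μ r d = 0 :=
    E_zero hb μ hrec h0 h1 (tsum_id_mu_zero μ hμ) hS
  have hbR : (b : ℝ) ≠ 0 := by positivity
  have key : ∀ d : ℤ, (d : ℝ) ^ 2 * μ (b * rt + r0) d
      = (((b : ℝ) - r0) / b) * ((d : ℝ) ^ 2 * μ rt (d - r0))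
        + ((r0 : ℝ) / b) * ((d : ℝ) ^ 2 * μ (rt + 1) (d - ((r0 : ℤ) - b))) := by
    intro d
    rw [hrec rt r0 hr0 d]
    ring_nf
  have hVR : V (b * rt + r0) = ∑' d : ℤ, (d : ℝ) ^ 2 * μ (b * rt + r0) d :=
    (hV (b * rt + r0)).tsum_eq.symm
  rw [hVR, tsum_congr key,
    Summable.tsum_add ((summable_shift2 _ _ (h0 rt) (h1 rt) (h2 rt)).mul_left _)
      ((summable_shift2 _ _ (h0 (rt + 1)) (h1 (rt + 1)) (h2 (rt + 1))).mul_left _),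
    tsum_mul_left, tsum_mul_left,
    tsum_shift2 _ _ (h0 rt) (h1 rt) (h2 rt),
    tsum_shift2 _ _ (h0 (rt + 1)) (h1 (rt + 1)) (h2 (rt + 1)),
    hS rt, hS (rt + 1), hE rt, hE (rt + 1),
    (hV rt).tsum_eq, (hV (rt + 1)).tsum_eq]
  push_cast
  field_simp
  ring
end
end

section
/- For every integer r with 0 ≤ r ≤ b−1, one has Var(μ^(r)) = r·(1+b−r); in particular Var(μ^(0)) = 0 and Var(μ^(1)) = b. -/
open Filter Topology MeasureTheory

noncomputable section

lemma digitSum_mod_div {b : ℕ} (hb : 2 ≤ b) (m : ℕ) :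
    digitSum b m = m % b + digitSum b (m / b) := by
  rcases Nat.eq_zero_or_pos m with h | h
  · simp [h, digitSum]
  · unfold digitSum
    rw [Nat.digits_def' (by omega : 1 < b) h, List.sum_cons]
def carry (b : ℕ) : ℕ → ℕ → ℕ := fun r n =>
  if h : 2 ≤ b ∧ b ≤ n % b + r ∧ 1 ≤ n then carry b 1 (n / b) + 1 else 0
  termination_by r n => n
  decreasing_by exact Nat.div_lt_self h.2.2 (by omega)
lemma carry_zero {b r n : ℕ} (h : ¬ (2 ≤ b ∧ b ≤ n % b + r ∧ 1 ≤ n)) : carry b r n = 0 := by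
  rw [carry]; simp [h]
lemma carry_succ {b r n : ℕ} (h : 2 ≤ b ∧ b ≤ n % b + r ∧ 1 ≤ n) :
    carry b r n = carry b 1 (n / b) + 1 := by
  rw [carry]; simp [h]

lemma delta_eq {b : ℕ} (hb : 2 ≤ b) : ∀ n r, r < b →
    delta b r n = (r : ℤ) - (b - 1) * carry b r n := by
  intro n
  induction n using Nat.strong_induction_on with
  | _ n ih =>
    intro r hr
    unfold delta
    by_cases h : b ≤ n % b + r
    · have hn : 1 ≤ n := by have := Nat.mod_le n b; omega
      rw [carry_succ ⟨hb, h, hn⟩]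
      have hmod : n % b < b := Nat.mod_lt _ (by omega)
      have e1 : (n + r) % b = n % b + r - b := by
        rw [Nat.add_mod, Nat.mod_eq_of_lt hr, Nat.mod_eq_sub_mod (by omega),
          Nat.mod_eq_of_lt (by omega)]
      have e2 : (n + r) / b = n / b + 1 := by
        have h1 : n + r = b * (n / b + 1) + (n % b + r - b) := by
          have h2 : b * (n / b + 1) = b * (n / b) + b := by ring
          have := Nat.div_add_mod n b; omega
        rw [h1, Nat.mul_add_div (by omega)]
        have : (n % b + r - b) / b = 0 := Nat.div_eq_of_lt (by omega)
        omega
      have hd : n / b < n := Nat.div_lt_self hn (by omega)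
      have key := ih (n / b) hd 1 (by omega)
      unfold delta at key
      rw [digitSum_mod_div hb (n + r), digitSum_mod_div hb n, e1, e2]
      push_cast [Nat.sub_add_cancel]
      have e3 : ((n % b + r - b : ℕ) : ℤ) = (n % b : ℕ) + r - b := by omega
      rw [e3]
      push_cast at key ⊢
      linarith [key]
    · rw [carry_zero (by tauto)]
      have hmod : n % b < b := Nat.mod_lt _ (by omega)
      have e1 : (n + r) % b = n % b + r := by
        rw [Nat.add_mod, Nat.mod_eq_of_lt hr, Nat.mod_eq_of_lt (by omega)]
      have e2 : (n + r) / b = n / b := by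
        have h1 : n + r = b * (n / b) + (n % b + r) := by
          have := Nat.div_add_mod n b; omega
        rw [h1, Nat.mul_add_div (by omega)]
        have : (n % b + r) / b = 0 := Nat.div_eq_of_lt (by omega)
        omega
      rw [digitSum_mod_div hb (n + r), digitSum_mod_div hb n, e1, e2]
      push_cast
      ring

lemma mod_mul_helper (b m n : ℕ) : n % (b * m) = b * (n / b % m) + n % b := by
  conv_lhs => rw [← Nat.div_add_mod (n % (b * m)) b]
  rw [Nat.mod_mul_right_div_self, Nat.mod_mod_of_dvd _ ⟨m, rfl⟩]

lemma carry_le_iff {b : ℕ} (hb : 2 ≤ b) : ∀ j r n, r < b →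
    (j + 1 ≤ carry b r n ↔ b ^ (j + 1) ≤ n % b ^ (j + 1) + r) := by
  intro j
  induction j with
  | zero =>
    intro r n hr
    rw [pow_one]
    have hle : n % b ≤ n := Nat.mod_le n b
    constructor
    · intro hc
      by_contra hcon
      rw [carry_zero (by tauto)] at hc; omega
    · intro hcond
      have hmod : n % b < b := Nat.mod_lt _ (by omega)
      rw [carry_succ ⟨hb, hcond, by omega⟩]
      exact Nat.succ_le_succ (Nat.zero_le _)
  | succ j ih =>
    intro r n hr
    have hBpos : 0 < b ^ (j + 1) := pow_pos (by omega) _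
    have hpow : b ^ (j + 1 + 1) = b * b ^ (j + 1) := by ring
    have hmod : n % b ^ (j + 1 + 1) = b * (n / b % b ^ (j + 1)) + n % b := by
      rw [hpow, mod_mul_helper]
    have hqlt : n / b % b ^ (j + 1) < b ^ (j + 1) := Nat.mod_lt _ hBpos
    have hnb : n % b < b := Nat.mod_lt _ (by omega)
    have hle : n % b ≤ n := Nat.mod_le n b
    have hBb : b ≤ b ^ (j + 1) := Nat.le_self_pow (by omega) b
    have h3 : b * 2 ≤ b * b ^ (j + 1) := Nat.mul_le_mul_left _ (by omega)
    by_cases h : b ≤ n % b + r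
    · have hn : 1 ≤ n := by omega
      rw [carry_succ ⟨hb, h, hn⟩, hmod, hpow, Nat.add_le_add_iff_right,
        ih 1 (n / b) (by omega)]
      constructor
      · intro hc
        have hqe : n / b % b ^ (j + 1) = b ^ (j + 1) - 1 := by omega
        have hf : b * (n / b % b ^ (j + 1)) = b * b ^ (j + 1) - b := by
          rw [hqe, Nat.mul_sub, mul_one]
        omega
      · intro hrhs
        by_contra hcon
        have h1 : b * (n / b % b ^ (j + 1)) ≤ b * (b ^ (j + 1) - 2) :=
          Nat.mul_le_mul_left _ (by omega)
        have h2 : b * (b ^ (j + 1) - 2) = b * b ^ (j + 1) - 2 * b := by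
          rw [Nat.mul_sub]; ring_nf
        omega
    · rw [carry_zero (by tauto), hmod, hpow]
      have h1 : b * (n / b % b ^ (j + 1)) ≤ b * (b ^ (j + 1) - 1) :=
        Nat.mul_le_mul_left _ (by omega)
      have h2 : b * (b ^ (j + 1) - 1) = b * b ^ (j + 1) - b := by
        rw [Nat.mul_sub, mul_one]
      constructor
      · omega
      · intro hrhs; omega

lemma count_range_filter (m r : ℕ) (hm : 0 < m) (hr : r ≤ m) :
    ((Finset.range m).filter fun k => m ≤ k + r).card = r := by
  have : (Finset.range m).filter (fun k => m ≤ k + r) = Finset.Ico (m - r) m := by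
    ext k; simp only [Finset.mem_filter, Finset.mem_range, Finset.mem_Ico]; omega
  rw [this, Nat.card_Ico]; omega

lemma count_block (m r : ℕ) (hm : 0 < m) (hr : r ≤ m) :
    ∀ q : ℕ, ((Finset.range (m * q)).filter fun n => m ≤ n % m + r).card = r * q := by
  intro q
  induction q with
  | zero => simp
  | succ q ih =>
    have hsplit : m * (q + 1) = m * q + m := by ring
    rw [hsplit, Finset.range_add, Finset.filter_union, Finset.card_union_of_disjoint,
      ih, Finset.filter_map, Finset.card_map]
    · have : (Finset.range m).filter ((fun n => m ≤ n % m + r) ∘ (addLeftEmbedding (m*q))) =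
          (Finset.range m).filter (fun k => m ≤ k + r) := by
        apply Finset.filter_congr
        intro k hk
        simp only [Finset.mem_range] at hk
        simp only [Function.comp_apply, addLeftEmbedding_apply]
        rw [Nat.mul_add_mod m q k, Nat.mod_eq_of_lt hk]
      rw [this, count_range_filter m r hm hr]; ring
    · exact Finset.disjoint_filter_filter (by
        simp only [Finset.disjoint_left, Finset.mem_map, Finset.mem_range]
        rintro a ha ⟨c, hc, rfl⟩
        simp only [addLeftEmbedding_apply] at ha
        omega)

lemma count_bounds (m r N : ℕ) (hm : 0 < m) (hr : r ≤ m) :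
    r * (N / m) ≤ ((Finset.range N).filter fun n => m ≤ n % m + r).card ∧
    ((Finset.range N).filter fun n => m ≤ n % m + r).card ≤ r * (N / m) + r := by
  have hl : m * (N / m) ≤ N := Nat.mul_div_le N m
  have hu : N ≤ m * (N / m) + m := by
    have h1 := Nat.div_add_mod N m
    have h2 : N % m < m := Nat.mod_lt _ hm
    omega
  constructor
  · rw [← count_block m r hm hr (N / m)]
    exact Finset.card_le_card (Finset.filter_subset_filter _
      (Finset.range_subset_range.2 hl))
  · have : r * (N / m) + r = r * (N / m + 1) := by ring
    rw [this, ← count_block m r hm hr (N / m + 1)]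
    refine Finset.card_le_card (Finset.filter_subset_filter _ (Finset.range_subset_range.2 ?_))
    have : m * (N / m + 1) = m * (N / m) + m := by ring
    omega

lemma tendsto_div_aux (m : ℕ) (hm : 0 < m) :
    Filter.Tendsto (fun N : ℕ => ((N / m : ℕ) : ℝ) / N) atTop (𝓝 (1 / m)) := by
  have hmod : Filter.Tendsto (fun N : ℕ => ((N % m : ℕ) : ℝ) / N) atTop (𝓝 0) := by
    apply squeeze_zero (fun N => by positivity) (g := fun N : ℕ => (m : ℝ) / N)
    · intro N
      rcases Nat.eq_zero_or_pos N with h | h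
      · simp [h]
      · have h1 : ((N % m : ℕ) : ℝ) ≤ (m : ℝ) := by
          exact_mod_cast (Nat.mod_lt N hm).le
        have h2 : (0 : ℝ) < N := by exact_mod_cast h
        exact (div_le_div_iff_of_pos_right h2).2 h1
    · exact tendsto_const_div_atTop_nhds_zero_nat (m : ℝ)
  have key : ∀ N : ℕ, 1 ≤ N →
      (1 - ((N % m : ℕ) : ℝ) / N) / m = ((N / m : ℕ) : ℝ) / N := by
    intro N hN
    have hNR : (N : ℝ) ≠ 0 := by positivity
    have hmR : (m : ℝ) ≠ 0 := by positivity
    have h1 : (m : ℝ) * ((N / m : ℕ) : ℝ) + ((N % m : ℕ) : ℝ) = N := by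
      exact_mod_cast Nat.div_add_mod N m
    field_simp
    rw [show ((N : ℝ) - ((N % m : ℕ) : ℝ)) = (m : ℝ) * ((N / m : ℕ) : ℝ) by linarith]
  have h2 : Filter.Tendsto (fun N : ℕ => (1 - ((N % m : ℕ) : ℝ) / N) / m)
      atTop (𝓝 ((1 - 0) / m)) := (tendsto_const_nhds.sub hmod).div_const m
  simp only [sub_zero] at h2
  exact h2.congr' (by filter_upwards [eventually_ge_atTop 1] with N hN using key N hN)

lemma tendsto_density (m r : ℕ) (hm : 0 < m) (hr : r ≤ m) :
    Filter.Tendsto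
      (fun N : ℕ => ((((Finset.range N).filter fun n => m ≤ n % m + r).card : ℕ) : ℝ) / N)
      atTop (𝓝 ((r : ℝ) / m)) := by
  have hlo : Filter.Tendsto (fun N : ℕ => (r : ℝ) * (((N / m : ℕ) : ℝ) / N)) atTop
      (𝓝 ((r : ℝ) * (1 / m))) := (tendsto_div_aux m hm).const_mul _
  have hhi : Filter.Tendsto
      (fun N : ℕ => (r : ℝ) * (((N / m : ℕ) : ℝ) / N) + (r : ℝ) / N) atTop
      (𝓝 ((r : ℝ) * (1 / m) + 0)) :=
    hlo.add (tendsto_const_div_atTop_nhds_zero_nat (r : ℝ))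
  have hval : (r : ℝ) * (1 / m) = (r : ℝ) / m := by ring
  rw [hval] at hlo
  rw [add_zero, hval] at hhi
  apply tendsto_of_tendsto_of_tendsto_of_le_of_le' hlo hhi
  · filter_upwards [eventually_ge_atTop 1] with N hN
    have hN : (0 : ℝ) < N := by exact_mod_cast hN
    have := (count_bounds m r N hm hr).1
    have hcast : (r : ℝ) * ((N / m : ℕ) : ℝ) ≤
        (((Finset.range N).filter fun n => m ≤ n % m + r).card : ℝ) := by
      exact_mod_cast this
    calc (r : ℝ) * (((N / m : ℕ) : ℝ) / N) = (r : ℝ) * ((N / m : ℕ) : ℝ) / N := by ring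
    _ ≤ _ := (div_le_div_iff_of_pos_right hN).2 hcast
  · filter_upwards [eventually_ge_atTop 1] with N hN
    have hN : (0 : ℝ) < N := by exact_mod_cast hN
    have := (count_bounds m r N hm hr).2
    have hcast : (((Finset.range N).filter fun n => m ≤ n % m + r).card : ℝ) ≤
        (r : ℝ) * ((N / m : ℕ) : ℝ) + r := by
      exact_mod_cast this
    calc (((Finset.range N).filter fun n => m ≤ n % m + r).card : ℝ) / N
        ≤ ((r : ℝ) * ((N / m : ℕ) : ℝ) + r) / N := by
          exact (div_le_div_iff_of_pos_right hN).2 hcast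
    _ = (r : ℝ) * (((N / m : ℕ) : ℝ) / N) + (r : ℝ) / N := by ring

lemma hasSum_quad (R Q x : ℝ) (hx : ‖x‖ < 1) :
    HasSum (fun j : ℕ => (R - Q * j) ^ 2 * x ^ j)
      (2 * Q ^ 2 * (1 / (1 - x) ^ 3) + ((-2 * R * Q - 3 * Q ^ 2) * (1 / (1 - x) ^ 2)
        + (Q ^ 2 + 2 * R * Q + R ^ 2) * (1 - x)⁻¹)) := by
  have hs0 := (hasSum_geometric_of_norm_lt_one hx).mul_left (Q ^ 2 + 2 * R * Q + R ^ 2)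
  have hs1 := (hasSum_choose_mul_geometric_of_norm_lt_one 1 hx).mul_left (-2 * R * Q - 3 * Q ^ 2)
  have hs2 := (hasSum_choose_mul_geometric_of_norm_lt_one 2 hx).mul_left (2 * Q ^ 2)
  have H := hs2.add (hs1.add hs0)
  have hfe : ∀ j : ℕ,
      2 * Q ^ 2 * (((j + 2).choose 2 : ℝ) * x ^ j)
        + ((-2 * R * Q - 3 * Q ^ 2) * (((j + 1).choose 1 : ℝ) * x ^ j)
          + (Q ^ 2 + 2 * R * Q + R ^ 2) * x ^ j) = (R - Q * j) ^ 2 * x ^ j := by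
    intro j
    rw [Nat.cast_choose_two, Nat.choose_one_right]
    push_cast
    ring
  exact (funext hfe : _ = _) ▸ H

lemma hasSum_G (b r : ℕ) (hb : 2 ≤ b) (hrb : r < b) :
    HasSum (fun j : ℕ =>
      (((r : ℤ) - ((b : ℤ) - 1) * j : ℤ) : ℝ) ^ 2 *
        (if j = 0 then 1 - (r : ℝ) / b else (r : ℝ) / (b:ℝ) ^ j - (r : ℝ) / (b:ℝ) ^ (j + 1)))
      ((r : ℝ) * (1 + (b : ℝ) - r)) := by
  set R := (r : ℝ) with hR
  set Q := (b : ℝ) - 1 with hQ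
  set x := ((b : ℝ))⁻¹ with hx
  have hb0 : (b : ℝ) ≠ 0 := by positivity
  have hbpos : (0:ℝ) < b := by positivity
  have hb1 : (1:ℝ) ≤ (b:ℝ) := by exact_mod_cast Nat.one_le_iff_ne_zero.2 (by omega)
  have h2b : (2:ℝ) ≤ (b:ℝ) := by exact_mod_cast hb
  have hQ0 : Q ≠ 0 := by rw [hQ]; intro h; linarith
  have hxn : ‖x‖ < 1 := by
    rw [Real.norm_eq_abs, abs_of_pos (by positivity)]
    rw [hx, inv_lt_one_iff₀]
    right; exact_mod_cast by omega
  have h1x : 1 - x = Q * x := by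
    rw [hQ, hx]; field_simp
  have hquad := hasSum_quad R Q x hxn
  have hh := hquad.mul_left (R * Q / b)
  have hδ := hasSum_ite_eq (0 : ℕ) (R ^ 2 * (1 - R / b) - R * Q / b * (R ^ 2 * x ^ 0))
  have H := hh.add hδ
  have hfe : ∀ j : ℕ,
      R * Q / b * ((R - Q * j) ^ 2 * x ^ j) +
        (if j = 0 then R ^ 2 * (1 - R / b) - R * Q / b * (R ^ 2 * x ^ 0) else 0) =
      (((r : ℤ) - ((b : ℤ) - 1) * j : ℤ) : ℝ) ^ 2 *
        (if j = 0 then 1 - (r : ℝ) / b else (r : ℝ) / (b:ℝ) ^ j - (r : ℝ) / (b:ℝ) ^ (j + 1)) := by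
    intro j
    have hcast : (((r : ℤ) - ((b : ℤ) - 1) * j : ℤ) : ℝ) = R - Q * j := by
      push_cast [hR, hQ]; ring
    rw [hcast]
    cases j with
    | zero => norm_num [hR]
    | succ j =>
      simp only [if_neg (Nat.succ_ne_zero j)]
      rw [add_zero]
      have hxp : ∀ k : ℕ, x ^ k = ((b:ℝ) ^ k)⁻¹ := fun k => by rw [hx, inv_pow]
      rw [hxp]
      have hbk : ((b:ℝ) ^ (j + 1)) ≠ 0 := by positivity
      have hbk2 : ((b:ℝ) ^ (j + 2)) ≠ 0 := by positivity
      rw [hQ, hR]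
      field_simp
      ring
  have hval : R * Q / b *
        (2 * Q ^ 2 * (1 / (1 - x) ^ 3) + ((-2 * R * Q - 3 * Q ^ 2) * (1 / (1 - x) ^ 2)
          + (Q ^ 2 + 2 * R * Q + R ^ 2) * (1 - x)⁻¹)) +
        (R ^ 2 * (1 - R / b) - R * Q / b * (R ^ 2 * x ^ 0)) = R * (1 + (b:ℝ) - R) := by
    rw [h1x]
    simp only [hQ, hR, hx]
    have hbm1 : (b:ℝ) - 1 ≠ 0 := by intro h; linarith
    field_simp
    ring
  rw [← hval]
  exact (funext hfe : _ = _) ▸ H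

section
variable {b r : ℕ} (hb : 2 ≤ b) (hrb : r < b)

lemma pred_equiv (j n : ℕ) (hb : 2 ≤ b) (hrb : r < b) :
    delta b r n = (r : ℤ) - ((b : ℤ) - 1) * j ↔ carry b r n = j := by
  rw [delta_eq hb n r hrb]
  have hb1 : ((b : ℤ) - 1) ≠ 0 := by
    have : (2:ℤ) ≤ (b:ℤ) := by exact_mod_cast hb
    omega
  constructor
  · intro h
    have h2 : ((b:ℤ) - 1) * (carry b r n) = ((b:ℤ) - 1) * j := by linarith
    exact_mod_cast mul_left_cancel₀ hb1 h2
  · rintro rfl; rfl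

lemma tendsto_carry_zero (hb : 2 ≤ b) (hrb : r < b) :
    Filter.Tendsto
      (fun N : ℕ => (((Finset.range N).filter fun n => carry b r n = 0).card : ℝ) / N)
      atTop (𝓝 (1 - (r : ℝ) / b ^ 1)) := by
  have hpos : 0 < b ^ 1 := by positivity
  have hrm : r ≤ b ^ 1 := by simpa using hrb.le
  have hden := tendsto_density (b ^ 1) r hpos hrm
  rw [Nat.cast_pow] at hden
  have hcard : ∀ N : ℕ,
      (((Finset.range N).filter fun n => carry b r n = 0).card : ℝ) =
      (N : ℝ) - (((Finset.range N).filter fun n => b ^ 1 ≤ n % b ^ 1 + r).card : ℝ) := by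
    intro N
    have hcongr : ((Finset.range N).filter fun n => carry b r n = 0) =
        ((Finset.range N).filter fun n => ¬ (b ^ 1 ≤ n % b ^ 1 + r)) := by
      apply Finset.filter_congr
      intro n _
      have := carry_le_iff hb 0 r n hrb
      simp only [zero_add] at this
      constructor
      · intro h hc; have := this.mpr hc; omega
      · intro h; by_contra hc; exact h (this.1 (by omega))
    rw [hcongr]
    have := Finset.card_filter_add_card_filter_not
      (s := Finset.range N) (p := fun n => b ^ 1 ≤ n % b ^ 1 + r)
    rw [Finset.card_range] at this
    have h2 : ((Finset.range N).filter fun n => ¬ b ^ 1 ≤ n % b ^ 1 + r).card =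
        N - ((Finset.range N).filter fun n => b ^ 1 ≤ n % b ^ 1 + r).card := by omega
    have hle : (((Finset.range N).filter fun n => b ^ 1 ≤ n % b ^ 1 + r).card) ≤ N := by omega
    rw [h2, Nat.cast_sub hle]
  have H : Filter.Tendsto
      (fun N : ℕ => (N : ℝ) / N -
        (((Finset.range N).filter fun n => b ^ 1 ≤ n % b ^ 1 + r).card : ℝ) / N)
      atTop (𝓝 (1 - (r : ℝ) / b ^ 1)) := by
    apply Filter.Tendsto.sub _ hden
    apply Filter.Tendsto.congr' _ tendsto_const_nhds
    filter_upwards [eventually_ge_atTop 1] with N hN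
    have : (N:ℝ) ≠ 0 := by positivity
    rw [div_self this]
  apply H.congr
  intro N
  rw [hcard N, sub_div]
lemma tendsto_carry_succ (hb : 2 ≤ b) (hrb : r < b) (j : ℕ) :
    Filter.Tendsto
      (fun N : ℕ => (((Finset.range N).filter fun n => carry b r n = j + 1).card : ℝ) / N)
      atTop (𝓝 ((r : ℝ) / (b:ℝ) ^ (j + 1) - (r : ℝ) / (b:ℝ) ^ (j + 2))) := by
  have hpos1 : 0 < b ^ (j + 1) := by positivity
  have hpos2 : 0 < b ^ (j + 2) := by positivity
  have hr1 : r ≤ b ^ (j + 1) := hrb.le.trans (Nat.le_self_pow (by omega) b)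
  have hr2 : r ≤ b ^ (j + 2) := hrb.le.trans (Nat.le_self_pow (by omega) b)
  have hden1 := tendsto_density (b ^ (j + 1)) r hpos1 hr1
  have hden2 := tendsto_density (b ^ (j + 2)) r hpos2 hr2
  rw [Nat.cast_pow] at hden1 hden2
  have hsplit : ∀ N : ℕ,
      ((Finset.range N).filter fun n => b ^ (j + 1) ≤ n % b ^ (j + 1) + r).card =
      ((Finset.range N).filter fun n => carry b r n = j + 1).card +
      ((Finset.range N).filter fun n => b ^ (j + 2) ≤ n % b ^ (j + 2) + r).card := by
    intro N
    have hcongr : ((Finset.range N).filter fun n => b ^ (j + 1) ≤ n % b ^ (j + 1) + r) =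
        ((Finset.range N).filter fun n =>
          carry b r n = j + 1 ∨ b ^ (j + 2) ≤ n % b ^ (j + 2) + r) := by
      apply Finset.filter_congr
      intro n _
      have h1 := carry_le_iff hb j r n hrb
      have h2 := carry_le_iff hb (j + 1) r n hrb
      rw [show j + 1 + 1 = j + 2 from rfl] at h2
      rw [← h1, ← h2]
      omega
    rw [hcongr, Finset.filter_or, Finset.card_union_of_disjoint]
    rw [Finset.disjoint_filter]
    intro n _ hc h2'
    have h2 := carry_le_iff hb (j + 1) r n hrb
    rw [show j + 1 + 1 = j + 2 from rfl] at h2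
    have := h2.mpr h2'
    omega
  have H : Filter.Tendsto
      (fun N : ℕ =>
        (((Finset.range N).filter fun n => b ^ (j + 1) ≤ n % b ^ (j + 1) + r).card : ℝ) / N -
        (((Finset.range N).filter fun n => b ^ (j + 2) ≤ n % b ^ (j + 2) + r).card : ℝ) / N)
      atTop (𝓝 ((r : ℝ) / (b:ℝ) ^ (j + 1) - (r : ℝ) / (b:ℝ) ^ (j + 2))) := hden1.sub hden2
  apply H.congr
  intro N
  rw [hsplit N]
  push_cast
  ring

lemma main_var (hb : 2 ≤ b) (hrb : r < b)
    (μ : ℕ → ℤ → ℝ)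
    (hμ : ∀ (d : ℤ),
      Tendsto (fun N : ℕ =>
        (((Finset.range N).filter fun n => delta b r n = d).card : ℝ) / N)
        atTop (𝓝 (μ r d)))
    (V : ℝ)
    (hV : HasSum (fun d : ℤ => (d : ℝ) ^ 2 * μ r d) V) :
    V = (r : ℝ) * (1 + (b : ℝ) - r) := by
  have hcongr : ∀ (j : ℕ) (N : ℕ),
      ((Finset.range N).filter fun n => delta b r n = (r:ℤ) - ((b:ℤ)-1) * j) =
      ((Finset.range N).filter fun n => carry b r n = j) := by
    intro j N
    exact Finset.filter_congr fun n _ => by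
      simpa using pred_equiv (b := b) (r := r) j n hb hrb
  have hμe : ∀ j : ℕ, μ r ((r:ℤ) - ((b:ℤ)-1) * j) =
      (if j = 0 then 1 - (r : ℝ) / b else (r : ℝ) / (b:ℝ) ^ j - (r : ℝ) / (b:ℝ) ^ (j + 1)) := by
    intro j
    cases j with
    | zero =>
      refine tendsto_nhds_unique (hμ _) ?_
      have h0 := tendsto_carry_zero hb hrb
      rw [pow_one] at h0
      simp only [if_pos rfl]
      exact h0.congr fun N => by rw [hcongr 0 N]
    | succ j =>
      refine tendsto_nhds_unique (hμ _) ?_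
      have h0 := tendsto_carry_succ hb hrb j
      simp only [if_neg (Nat.succ_ne_zero j)]
      have h1 : (r : ℝ) / (b:ℝ) ^ (j + 1) - (r : ℝ) / (b:ℝ) ^ (j + 2) =
          (r : ℝ) / (b:ℝ) ^ (j + 1) - (r : ℝ) / (b:ℝ) ^ (j + 1 + 1) := rfl
      rw [h1] at h0
      exact h0.congr fun N => by rw [hcongr (j + 1) N]
  have hμ0 : ∀ d : ℤ, (∀ j : ℕ, d ≠ (r:ℤ) - ((b:ℤ)-1) * j) → μ r d = 0 := by
    intro d hd
    refine tendsto_nhds_unique (hμ d) ?_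
    have hzero : ∀ N, ((Finset.range N).filter fun n => delta b r n = d) = ∅ := by
      intro N
      apply Finset.filter_false_of_mem
      intro n _ h
      exact hd (carry b r n) (by rw [← h, delta_eq hb n r hrb])
    exact tendsto_const_nhds.congr fun N => by rw [hzero N]; simp
  have hb1 : ((b:ℤ) - 1) ≠ 0 := by
    have : (2:ℤ) ≤ (b:ℤ) := by exact_mod_cast hb
    omega
  have hinj : Function.Injective (fun j : ℕ => (r:ℤ) - ((b:ℤ)-1) * j) := by
    intro a c h
    simp only at h
    have h2 : ((b:ℤ)-1) * (a:ℤ) = ((b:ℤ)-1) * (c:ℤ) := by linarith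
    exact_mod_cast mul_left_cancel₀ hb1 h2
  have hG := hasSum_G b r hb hrb
  set G : ℕ → ℝ := fun j : ℕ =>
      (((r : ℤ) - ((b : ℤ) - 1) * j : ℤ) : ℝ) ^ 2 *
        (if j = 0 then 1 - (r : ℝ) / b else (r : ℝ) / (b:ℝ) ^ j - (r : ℝ) / (b:ℝ) ^ (j + 1))
    with hGdef
  have key : ∀ j : ℕ, (((((r:ℤ) - ((b:ℤ)-1) * j) : ℤ) : ℝ))^2 * μ r ((r:ℤ) - ((b:ℤ)-1) * j)
      = G j := by
    intro j
    rw [hμe j, hGdef]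
  have hiff := hasSum_iff_hasSum_of_ne_zero_bij
    (f := fun d : ℤ => (d : ℝ) ^ 2 * μ r d) (g := G) (a := V)
    (fun x => (r:ℤ) - ((b:ℤ)-1) * (x.1 : ℕ))
    (fun x y h => Subtype.ext (hinj h))
    (by
      intro d hd
      simp only [Function.mem_support] at hd
      by_cases hdr : ∀ j : ℕ, d ≠ (r:ℤ) - ((b:ℤ)-1) * j
      · exact absurd (by rw [hμ0 d hdr]; ring) hd
      · push_neg at hdr
        obtain ⟨j, hj⟩ := hdr
        refine ⟨⟨j, ?_⟩, hj.symm⟩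
        simp only [Function.mem_support]
        rw [← key j, ← hj]
        exact hd)
    (fun x => key x.1)
  exact (hiff.mp hV).unique hG

end

/-- **Lemma (variance for one-digit `r`).** For every `0 ≤ r ≤ b-1`,
`Var(μ^(r)) = r·(1+b-r)`; in particular `Var(μ^(0)) = 0` and `Var(μ^(1)) = b`. -/
theorem variance_one_digit (b : ℕ) (hb : 2 ≤ b)
    (μ : ℕ → ℤ → ℝ)
    (hμ : ∀ (r : ℕ) (d : ℤ),
      Tendsto (fun N : ℕ =>
        (((Finset.range N).filter fun n => delta b r n = d).card : ℝ) / N)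
        atTop (𝓝 (μ r d)))
    (V : ℕ → ℝ)
    (hV : ∀ r : ℕ, HasSum (fun d : ℤ => (d : ℝ) ^ 2 * μ r d) (V r))
    :
    (∀ r : ℕ, r ≤ b - 1 → V r = (r : ℝ) * (1 + (b : ℝ) - r)) ∧
    V 0 = 0 ∧ V 1 = b := by
  have hmain : ∀ r : ℕ, r ≤ b - 1 → V r = (r : ℝ) * (1 + (b : ℝ) - r) := by
    intro r hr
    exact main_var hb (by omega) μ (hμ r) (V r) (hV r)
  refine ⟨hmain, ?_, ?_⟩
  · have := hmain 0 (by omega)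
    simpa using this
  · have := hmain 1 (by omega)
    rw [this]
    norm_num
end
end

section
/- For every r̂ ∈ ℕ and every integer m ≥ 1, Var(μ^(b^m·r̂ + b^m − 1)) = (1/b^m)·Var(μ^(r̂)) + (1 − 1/b^m)·Var(μ^(r̂+1)) + b − 1/b^{m−1}. In particular (taking r̂ = 0), Var(μ^(b^m − 1)) = 2b − 2/b^{m−1}. -/
open Filter Topology MeasureTheory

noncomputable section

namespace VarAux

variable {b : ℕ}

abbrev HMU (b : ℕ) (μ : ℕ → ℤ → ℝ) : Prop := ∀ (r : ℕ) (d : ℤ),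
      Tendsto (fun N : ℕ =>
        (((Finset.range N).filter fun n => delta b r n = d).card : ℝ) / N)
        atTop (𝓝 (μ r d))

@[simp] lemma digitSum_zero : digitSum b 0 = 0 := by simp [digitSum]

lemma digitSum_of_lt (x : ℕ) (hx : x < b) : digitSum b x = x := by
  rcases Nat.eq_zero_or_pos x with h | h
  · simp [h]
  · rw [digitSum, Nat.digits_of_lt b x (by omega) hx, List.sum_cons, List.sum_nil]
    omega

lemma digitSum_base_mul_add (hb : 2 ≤ b) (k x : ℕ) (hx : x < b) :
    digitSum b (b * k + x) = digitSum b k + x := by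
  rcases Nat.eq_zero_or_pos (b * k + x) with h | h
  · have hk : k = 0 := by
      rcases Nat.eq_zero_or_pos k with hk | hk
      · exact hk
      · exfalso; nlinarith
    have hx0 : x = 0 := by omega
    simp [hk, hx0]
  · have hd := Nat.digits_def' (by omega : 1 < b) h
    have hmod : (b * k + x) % b = x := by
      rw [Nat.mul_add_mod, Nat.mod_eq_of_lt hx]
    have hdiv : (b * k + x) / b = k := by
      rw [Nat.mul_add_div (by omega), Nat.div_eq_of_lt hx, add_zero]
    rw [hmod, hdiv] at hd
    show (Nat.digits b (b * k + x)).sum = digitSum b k + x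
    rw [hd, List.sum_cons]
    simp [digitSum]
    omega

/-- Digit sum splits across a block: `s(b^t q + v) = s q + s v` for `v < b^t`. -/
lemma digitSum_pow_mul_add (hb : 2 ≤ b) (t : ℕ) :
    ∀ q v, v < b ^ t → digitSum b (b ^ t * q + v) = digitSum b q + digitSum b v := by
  induction t with
  | zero =>
    intro q v hv
    have : v = 0 := by simpa using hv
    simp [this]
  | succ t ih =>
    intro q v hv
    have hvx : v % b < b := Nat.mod_lt _ (by omega)
    have hv' : v / b < b ^ t := by
      rw [Nat.div_lt_iff_lt_mul (by omega)]
      calc v < b ^ (t+1) := hv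
        _ = b ^ t * b := by ring
    have hvdm : v = b * (v / b) + v % b := (Nat.div_add_mod v b).symm
    have key : b ^ (t+1) * q + v = b * (b ^ t * q + v / b) + v % b := by
      conv_lhs => rw [hvdm]
      ring
    have hv2 : digitSum b v = digitSum b (v / b) + v % b := by
      conv_lhs => rw [hvdm]
      rw [digitSum_base_mul_add hb _ _ hvx]
    rw [key, digitSum_base_mul_add hb _ _ hvx, ih q (v / b) hv', hv2, Nat.add_assoc]

/-- `s v ≤ (b-1)·t` for `v < b^t`. -/
lemma digitSum_le (hb : 2 ≤ b) (t : ℕ) : ∀ v, v < b ^ t → digitSum b v ≤ (b - 1) * t := by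
  induction t with
  | zero =>
    intro v hv
    have : v = 0 := by simpa using hv
    simp [this]
  | succ t ih =>
    intro v hv
    have hvx : v % b < b := Nat.mod_lt _ (by omega)
    have hv' : v / b < b ^ t := by
      rw [Nat.div_lt_iff_lt_mul (by omega)]
      calc v < b ^ (t+1) := hv
        _ = b ^ t * b := by ring
    have hvdm : v = b * (v / b) + v % b := (Nat.div_add_mod v b).symm
    rw [hvdm, digitSum_base_mul_add hb _ _ hvx]
    have h1 := ih _ hv'
    have h2 : v % b ≤ b - 1 := by omega
    calc digitSum b (v / b) + v % b ≤ (b-1) * t + (b-1) := by omega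
      _ = (b-1) * (t+1) := by ring

/-- `s(n+1) ≤ s(n) + 1`. -/
lemma digitSum_succ_le (hb : 2 ≤ b) : ∀ n, digitSum b (n + 1) ≤ digitSum b n + 1 := by
  intro n
  induction n using Nat.strong_induction_on with
  | _ n ih =>
    have hbx : n % b < b := Nat.mod_lt _ (by omega)
    have hdm : n = b * (n / b) + n % b := (Nat.div_add_mod n b).symm
    by_cases hc : n % b = b - 1
    · have h1 : n + 1 = b * (n / b + 1) + 0 := by rw [Nat.mul_add, Nat.mul_one]; omega
      rw [h1, digitSum_base_mul_add hb _ _ (by omega)]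
      rcases Nat.eq_zero_or_pos n with h0 | h0
      · subst h0
        simp only [Nat.zero_div, digitSum_zero, Nat.add_zero, Nat.zero_add]
        rw [digitSum_of_lt 1 (by omega)]
      · have hlt : n / b < n := Nat.div_lt_self h0 (by omega)
        have h2 := ih (n / b) hlt
        conv_rhs => rw [hdm, digitSum_base_mul_add hb _ _ hbx]
        omega
    · have h1 : n + 1 = b * (n / b) + (n % b + 1) := by omega
      rw [h1, digitSum_base_mul_add hb _ _ (by omega)]
      conv_rhs => rw [hdm, digitSum_base_mul_add hb _ _ hbx]
      omega

lemma digitSum_add_le (hb : 2 ≤ b) (n r : ℕ) : digitSum b (n + r) ≤ digitSum b n + r := by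
  induction r with
  | zero => simp
  | succ r ih =>
    calc digitSum b (n + (r+1)) = digitSum b ((n + r) + 1) := by ring_nf
      _ ≤ digitSum b (n + r) + 1 := digitSum_succ_le hb _
      _ ≤ digitSum b n + (r + 1) := by omega

lemma delta_le (hb : 2 ≤ b) (r n : ℕ) : delta b r n ≤ (r : ℤ) := by
  have := digitSum_add_le hb n r
  simp only [delta]
  have : (digitSum b (n + r) : ℤ) ≤ (digitSum b n : ℤ) + r := by exact_mod_cast this
  omega

/-- If the last `j` digits of `q` are not all `b-1`, then `s(q+1) ≥ s(q) + 1 - (b-1)j`. -/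
lemma digitSum_succ_ge (hb : 2 ≤ b) (j : ℕ) :
    ∀ q, q % b ^ j ≠ b ^ j - 1 →
      (digitSum b q : ℤ) + 1 - ((b : ℤ) - 1) * (j : ℤ) ≤ (digitSum b (q + 1) : ℤ) := by
  induction j with
  | zero => intro q h; exact absurd (by omega : q % 1 = 0) (by simpa using h)
  | succ j ih =>
    intro q h
    have h2b : (2:ℤ) ≤ (b:ℤ) := by exact_mod_cast hb
    have hbx : q % b < b := Nat.mod_lt _ (by omega)
    have hdm : q = b * (q / b) + q % b := (Nat.div_add_mod q b).symm
    by_cases hc : q % b = b - 1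
    · have h1 : q + 1 = b * (q / b + 1) + 0 := by rw [Nat.mul_add, Nat.mul_one]; omega
      have hq' : q / b % b ^ j ≠ b ^ j - 1 := by
        intro hcon
        apply h
        have hbj : 1 ≤ b ^ j := Nat.one_le_pow _ _ (by omega)
        have h3 : q % b ^ (j+1) = b * (q / b % b ^ j) + q % b := by
          have e1 : q % (b * b ^ j) / b = q / b % b ^ j := Nat.mod_mul_right_div_self q b (b ^ j)
          have e2 : q % (b * b ^ j) % b = q % b :=
            Nat.mod_mod_of_dvd q ⟨b ^ j, rfl⟩
          have e3 : q % (b * b ^ j) = b * (q % (b * b ^ j) / b) + q % (b * b ^ j) % b :=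
            (Nat.div_add_mod _ b).symm
          rw [e1, e2] at e3
          rw [pow_succ']
          exact e3
        rw [h3, hcon, hc]
        have hp : b ^ (j+1) = b * b ^ j := by rw [pow_succ']
        have hble : b ≤ b * b ^ j := Nat.le_mul_of_pos_right b hbj
        rw [Nat.mul_sub, Nat.mul_one]
        omega
      have h2 := ih (q / b) hq'
      rw [h1, digitSum_base_mul_add hb _ _ (by omega)]
      conv_lhs => rw [hdm, digitSum_base_mul_add hb _ _ hbx, hc]
      push_cast [Nat.cast_sub (by omega : 1 ≤ b)]
      push_cast at h2
      linarith
    · have h1 : q + 1 = b * (q / b) + (q % b + 1) := by omega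
      rw [h1, digitSum_base_mul_add hb _ _ (by omega)]
      conv_lhs => rw [hdm, digitSum_base_mul_add hb _ _ hbx]
      have hnn : (0:ℤ) ≤ ((b:ℤ) - 1) * ((j:ℤ) + 1) := by
        apply mul_nonneg <;> [linarith; positivity]
      push_cast
      linarith


/-- `s(b^m - 1) = m(b-1)`. -/
lemma digitSum_pow_sub_one (hb : 2 ≤ b) : ∀ m, digitSum b (b ^ m - 1) = m * (b - 1) := by
  intro m
  induction m with
  | zero => simp [digitSum]
  | succ m ih =>
    have hbm : 1 ≤ b ^ m := Nat.one_le_pow _ _ (by omega)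
    have key : b ^ (m+1) - 1 = b * (b ^ m - 1) + (b - 1) := by
      have : b ^ (m+1) = b * b ^ m := by rw [pow_succ']
      rw [this, Nat.mul_sub, Nat.mul_one]
      have : b ≤ b * b ^ m := Nat.le_mul_of_pos_right b hbm
      omega
    rw [key, digitSum_base_mul_add hb _ _ (by omega), ih]
    ring

/-- telescoping sum of `Δ¹`. -/
lemma sum_delta_one (K : ℕ) :
    ∑ v ∈ Finset.range K, ((digitSum b (v+1) : ℝ) - digitSum b v) = digitSum b K := by
  induction K with
  | zero => simp [digitSum]
  | succ K ih => rw [Finset.sum_range_succ, ih]; ring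

lemma sum_range_mul {M : Type*} [AddCommMonoid M] (f : ℕ → M) (K : ℕ) :
    ∑ v ∈ Finset.range (b * K), f v = ∑ q ∈ Finset.range K, ∑ x ∈ Finset.range b, f (b*q+x) := by
  induction K with
  | zero => simp
  | succ K ih =>
    rw [Nat.mul_add, Nat.mul_one, Finset.sum_range_add, ih, Finset.sum_range_succ]

/-- The key combinatorial sum `T(m)`. -/
lemma sum_sq_delta_one (hb : 2 ≤ b) : ∀ m : ℕ,
    ∑ v ∈ Finset.range (b ^ m - 1), ((digitSum b (v+1) : ℝ) - digitSum b v)^2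
      = (b:ℝ)^(m+1) - b - (m:ℝ)^2 * ((b:ℝ)-1)^2 := by
  intro m
  induction m with
  | zero => simp
  | succ m ih =>
    have hbm : 1 ≤ b ^ m := Nat.one_le_pow _ _ (by omega)
    have key : b ^ (m+1) - 1 = b * (b ^ m - 1) + (b - 1) := by
      have h1 : b ^ (m+1) = b * b ^ m := by rw [pow_succ']
      rw [h1, Nat.mul_sub, Nat.mul_one]
      have : b ≤ b * b ^ m := Nat.le_mul_of_pos_right b hbm
      omega
    set g : ℕ → ℝ := fun v => ((digitSum b (v+1) : ℝ) - digitSum b v)^2 with hg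
    have hsmall : ∀ q x, x < b - 1 → g (b*q + x) = 1 := by
      intro q x hx
      have e1 : digitSum b (b*q + x) = digitSum b q + x :=
        digitSum_base_mul_add hb _ _ (by omega)
      have e2 : digitSum b (b*q + x + 1) = digitSum b q + (x+1) := by
        rw [Nat.add_assoc]
        exact digitSum_base_mul_add hb _ _ (by omega)
      simp only [hg, e1, e2]
      push_cast
      ring
    have hlast : ∀ q, g (b*q + (b-1)) =
        (((digitSum b (q+1) : ℝ) - digitSum b q) - ((b:ℝ)-1))^2 := by
      intro q
      have e1 : digitSum b (b*q + (b-1)) = digitSum b q + (b-1) :=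
        digitSum_base_mul_add hb _ _ (by omega)
      have e3 : b*q + (b-1) + 1 = b * (q+1) + 0 := by
        rw [Nat.mul_add, Nat.mul_one]; omega
      have e2 : digitSum b (b*q + (b-1) + 1) = digitSum b (q+1) := by
        rw [e3, digitSum_base_mul_add hb _ _ (by omega)]
        omega
      simp only [hg, e1, e2]
      have : ((digitSum b q + (b-1) : ℕ) : ℝ) = (digitSum b q : ℝ) + ((b:ℝ)-1) := by
        push_cast
        rw [Nat.cast_pred (show 0 < b by omega)]
      rw [this]
      ring
    have hinner : ∀ q, ∑ x ∈ Finset.range b, g (b*q+x)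
        = ((b:ℝ)-1) + (((digitSum b (q+1) : ℝ) - digitSum b q) - ((b:ℝ)-1))^2 := by
      intro q
      have hb1 : Finset.range b = Finset.range ((b-1) + 1) := by congr 1; omega
      rw [hb1, Finset.sum_range_succ, hlast q]
      have : ∑ x ∈ Finset.range (b-1), g (b*q+x) = ∑ x ∈ Finset.range (b-1), 1 := by
        apply Finset.sum_congr rfl
        intro x hx
        exact hsmall q x (Finset.mem_range.mp hx)
      rw [this, Finset.sum_const, Finset.card_range, nsmul_eq_mul,
        Nat.cast_pred (show 0 < b by omega)]
      ring
    rw [key, Finset.sum_range_add, sum_range_mul]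
    have hchunk2 : ∑ x ∈ Finset.range (b-1), g (b * (b^m - 1) + x)
        = ((b:ℝ) - 1) := by
      have : ∑ x ∈ Finset.range (b-1), g (b * (b^m-1) + x) = ∑ x ∈ Finset.range (b-1), 1 := by
        apply Finset.sum_congr rfl
        intro x hx
        exact hsmall _ x (Finset.mem_range.mp hx)
      rw [this, Finset.sum_const, Finset.card_range, nsmul_eq_mul,
        Nat.cast_pred (show 0 < b by omega)]
      ring
    rw [hchunk2]
    have hq : ∑ q ∈ Finset.range (b^m - 1), ∑ x ∈ Finset.range b, g (b*q+x)
        = ∑ q ∈ Finset.range (b^m - 1), (((b:ℝ)-1)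
            + (((digitSum b (q+1) : ℝ) - digitSum b q) - ((b:ℝ)-1))^2) :=
      Finset.sum_congr rfl fun q _ => hinner q
    rw [hq]
    have expand : ∀ q : ℕ, ((b:ℝ)-1) + (((digitSum b (q+1) : ℝ) - digitSum b q) - ((b:ℝ)-1))^2
        = (((digitSum b (q+1) : ℝ) - digitSum b q))^2
          - 2*((b:ℝ)-1) * ((digitSum b (q+1) : ℝ) - digitSum b q)
          + (((b:ℝ)-1) + ((b:ℝ)-1)^2) := fun q => by ring
    simp only [expand]
    rw [Finset.sum_add_distrib, Finset.sum_sub_distrib, ih, ← Finset.mul_sum,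
      sum_delta_one, Finset.sum_const, Finset.card_range, nsmul_eq_mul,
      digitSum_pow_sub_one hb]
    have c1 : ((b ^ m - 1 : ℕ) : ℝ) = (b:ℝ)^m - 1 := by
      rw [Nat.cast_pred (show 0 < b ^ m by omega)]
      push_cast
      ring
    have c2 : ((m * (b-1) : ℕ) : ℝ) = (m:ℝ) * ((b:ℝ)-1) := by
      push_cast
      rw [Nat.cast_pred (show 0 < b by omega)]
    rw [c1, c2]
    push_cast
    ring

/-- Tail lemma: a very negative `delta` forces a block of `(b-1)` digits. -/
lemma tail_digits (hb : 2 ≤ b) (t j r : ℕ) (hr : r < b ^ t) (n : ℕ)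
    (hΔ : delta b r n < -(((b:ℤ) - 1) * ((t:ℤ) + j))) :
    (n / b ^ t) % b ^ j = b ^ j - 1 := by
  rcases Nat.eq_zero_or_pos j with hj | hj
  · subst hj; simp [Nat.mod_one]
  by_contra hcon
  have h2b : (2:ℤ) ≤ (b:ℤ) := by exact_mod_cast hb
  set q := n / b ^ t with hq
  set v := n % b ^ t with hv
  have hvlt : v < b ^ t := Nat.mod_lt _ (Nat.pow_pos (by omega))
  have hdm : n = b ^ t * q + v := (Nat.div_add_mod n (b ^ t)).symm
  have hsv : digitSum b v ≤ (b-1) * t := digitSum_le hb t v hvlt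
  have hsn : digitSum b n = digitSum b q + digitSum b v := by
    rw [hdm]; exact digitSum_pow_mul_add hb t q v hvlt
  have hsvZ : (digitSum b v : ℤ) ≤ ((b:ℤ) - 1) * t := by
    have : ((digitSum b v : ℕ) : ℤ) ≤ (((b-1) * t : ℕ) : ℤ) := by exact_mod_cast hsv
    calc (digitSum b v : ℤ) ≤ (((b-1) * t : ℕ) : ℤ) := this
      _ = ((b:ℤ) - 1) * t := by push_cast [Nat.cast_sub (by omega : 1 ≤ b)]; ring
  rcases Nat.lt_or_ge (v + r) (b ^ t) with hcase | hcase
  · -- no carry into the q block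
    have hnr : n + r = b ^ t * q + (v + r) := by rw [hdm, Nat.add_assoc]
    have hs : digitSum b (n + r) = digitSum b q + digitSum b (v + r) := by
      rw [hnr]; exact digitSum_pow_mul_add hb t q (v+r) hcase
    have : delta b r n = (digitSum b (v+r) : ℤ) - digitSum b v := by
      simp only [delta, hs, hsn]; push_cast; ring
    rw [this] at hΔ
    have hnn : (0:ℤ) ≤ (digitSum b (v+r) : ℤ) := by positivity
    have hjpos : (1:ℤ) ≤ (j:ℤ) := by exact_mod_cast hj
    nlinarith
  · -- carry into the q block
    set w := v + r - b ^ t with hw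
    have hwlt : w < b ^ t := by omega
    have hnr : n + r = b ^ t * (q + 1) + w := by
      rw [hdm, hw, Nat.mul_add, Nat.mul_one]; omega
    have hs : digitSum b (n + r) = digitSum b (q+1) + digitSum b w := by
      rw [hnr]; exact digitSum_pow_mul_add hb t (q+1) w hwlt
    have hge := digitSum_succ_ge hb j q hcon
    have : delta b r n = ((digitSum b (q+1) : ℤ) - digitSum b q)
        + (digitSum b w : ℤ) - digitSum b v := by
      simp only [delta, hs, hsn]; push_cast; ring
    rw [this] at hΔ
    have hnn : (0:ℤ) ≤ (digitSum b w : ℤ) := by positivity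
    nlinarith

/-- Counting: few `n < N` have a full block of `(b-1)` digits in positions `t..t+j-1`. -/
lemma count_pattern (hb : 2 ≤ b) (t j N : ℕ) :
    (((Finset.range N).filter fun n => (n / b ^ t) % b ^ j = b ^ j - 1).card)
      ≤ (N / b ^ (t+j) + 1) * b ^ t := by
  classical
  have hbt : 0 < b ^ t := Nat.pow_pos (by omega)
  have hbtj : 0 < b ^ (t+j) := Nat.pow_pos (by omega)
  have := Finset.card_le_card_of_injOn
    (s := (Finset.range N).filter fun n => (n / b ^ t) % b ^ j = b ^ j - 1)
    (t := (Finset.range (N / b ^ (t+j) + 1)) ×ˢ (Finset.range (b ^ t)))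
    (fun n => (n / b ^ (t+j), n % b ^ t)) ?_ ?_
  · calc _ ≤ ((Finset.range (N / b ^ (t+j) + 1)) ×ˢ (Finset.range (b ^ t))).card := this
      _ = (N / b ^ (t+j) + 1) * b ^ t := by rw [Finset.card_product, Finset.card_range, Finset.card_range]
  · intro n hn
    simp only [Finset.mem_coe, Finset.mem_filter, Finset.mem_range] at hn
    simp only [Finset.mem_coe, Finset.mem_product, Finset.mem_range]
    exact ⟨by have := Nat.div_le_div_right (c := b ^ (t+j)) (Nat.le_of_lt hn.1); omega,
      Nat.mod_lt _ hbt⟩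
  · intro n1 h1 n2 h2 heq
    simp only [Finset.mem_coe, Finset.mem_filter, Finset.mem_range] at h1 h2
    simp only [Prod.mk.injEq] at heq
    have key : ∀ n : ℕ, (n / b ^ t) % b ^ j = b ^ j - 1 →
        n = b ^ (t+j) * (n / b ^ (t+j)) + (b ^ t * (b ^ j - 1) + n % b ^ t) := by
      intro n hn
      have e0 : b ^ (t+j) = b ^ t * b ^ j := pow_add b t j
      have e1 : n % (b ^ t * b ^ j) / b ^ t = n / b ^ t % b ^ j :=
        Nat.mod_mul_right_div_self n (b ^ t) (b ^ j)
      have e2 : n % (b ^ t * b ^ j) % b ^ t = n % b ^ t :=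
        Nat.mod_mod_of_dvd n ⟨b ^ j, rfl⟩
      have e3 : n % (b ^ t * b ^ j) = b ^ t * (n % (b ^ t * b ^ j) / b ^ t)
          + n % (b ^ t * b ^ j) % b ^ t := (Nat.div_add_mod _ _).symm
      rw [e1, e2, hn] at e3
      have e4 : n = b ^ (t+j) * (n / b ^ (t+j)) + n % (b ^ (t+j)) :=
        (Nat.div_add_mod _ _).symm
      rw [← e0] at e3
      omega
    have k1 := key n1 h1.2
    have k2 := key n2 h2.2
    rw [heq.1, heq.2] at k1
    omega


section SecA
variable (μ : ℕ → ℤ → ℝ) (hμ : HMU b μ)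
include hμ

lemma mu_nonneg (r : ℕ) (d : ℤ) : 0 ≤ μ r d :=
  ge_of_tendsto (hμ r d) (Eventually.of_forall fun N => by positivity)

lemma mu_eq_zero (r : ℕ) (d : ℤ) (h : ∀ n, delta b r n ≠ d) : μ r d = 0 := by
  refine tendsto_nhds_unique (hμ r d) ?_
  have : ∀ N : ℕ, (((Finset.range N).filter fun n => delta b r n = d).card : ℝ) / N = 0 := by
    intro N
    rw [Finset.filter_false_of_mem (fun n _ => h n), Finset.card_empty]
    simp
  simpa [this] using tendsto_const_nhds

/-- finite partial sums of `μ r` are limits of densities of unions. -/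
lemma tendsto_card_mem (r : ℕ) (S : Finset ℤ) :
    Tendsto (fun N : ℕ =>
        (((Finset.range N).filter fun n => delta b r n ∈ S).card : ℝ) / N)
      atTop (𝓝 (∑ d ∈ S, μ r d)) := by
  have h2 : ∀ N : ℕ, ∀ d ∈ S,
      ((Finset.range N).filter fun n => delta b r n ∈ S).filter (fun n => delta b r n = d)
        = (Finset.range N).filter fun n => delta b r n = d := by
    intro N d hd
    rw [Finset.filter_filter]
    apply Finset.filter_congr
    intro n _
    constructor
    · rintro ⟨_, h⟩; exact h
    · intro h; exact ⟨h ▸ hd, h⟩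
  have := tendsto_finset_sum S (fun d _ => hμ r d)
  refine this.congr fun N => ?_
  rw [← Finset.sum_div]
  congr 1
  rw [← Nat.cast_sum]
  congr 1
  rw [Finset.card_eq_sum_card_fiberwise
    (f := fun n => delta b r n) (s := (Finset.range N).filter fun n => delta b r n ∈ S) (t := S) (fun n hn => (Finset.mem_filter.mp hn).2)]
  exact (Finset.sum_congr rfl fun d hd => by rw [h2 N d hd]).symm

lemma partial_sum_le_one (r : ℕ) (S : Finset ℤ) : ∑ d ∈ S, μ r d ≤ 1 := by
  refine le_of_tendsto (tendsto_card_mem μ hμ r S) ?_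
  filter_upwards [eventually_ge_atTop 1] with N hN
  have hcard : (((Finset.range N).filter fun n => delta b r n ∈ S).card : ℝ) ≤ N := by
    exact_mod_cast (Finset.card_filter_le _ _).trans (by simp)
  rw [div_le_one (by positivity)]
  exact hcard

/-- The master decomposition lemma for densities. -/
lemma density_decomp {B : ℕ} (hB : 0 < B) (R : ℕ) (r' : ℕ → ℕ) (c : ℕ → ℤ)
    (hdec : ∀ u, u < B → ∀ q, delta b R (B * q + u) = delta b (r' u) q + c u) (d : ℤ) :
    μ R d = ∑ u ∈ Finset.range B, (1 / (B:ℝ)) * μ (r' u) (d - c u) := by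
  classical
  set Q : ℕ → ℕ → ℕ := fun u N => (N + (B - 1 - u)) / B with hQ
  have hQiff : ∀ u < B, ∀ q N, (B * q + u < N ↔ q < Q u N) := by
    intro u hu q N
    rw [hQ]
    simp only
    rw [show (q < (N + (B - 1 - u)) / B) ↔ (q + 1 ≤ (N + (B - 1 - u)) / B) from Iff.rfl,
      Nat.le_div_iff_mul_le hB]
    have e : (q+1)*B = B*q + B := by ring
    rw [e]
    omega
  -- counting identity
  have count : ∀ N : ℕ,
      ((Finset.range N).filter fun n => delta b R n = d).card
        = ∑ u ∈ Finset.range B,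
            ((Finset.range (Q u N)).filter fun q => delta b (r' u) q = d - c u).card := by
    intro N
    rw [Finset.card_eq_sum_card_fiberwise
      (f := fun n => n % B) (t := Finset.range B)
      (fun n _ => Finset.mem_range.mpr (Nat.mod_lt _ hB))]
    apply Finset.sum_congr rfl
    intro u hu
    have hu' : u < B := Finset.mem_range.mp hu
    apply Finset.card_bij' (i := fun n _ => n / B) (j := fun q _ => B * q + u)
    · intro n hn
      simp only [Finset.mem_filter, Finset.mem_range] at hn ⊢
      obtain ⟨⟨hnN, hdel⟩, hmod⟩ := hn
      have hn' : n = B * (n / B) + u := by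
        conv_lhs => rw [← Nat.div_add_mod n B]
        rw [hmod]
      constructor
      · rw [← hQiff u hu' _ N, ← hn']; exact hnN
      · have := hdec u hu' (n / B)
        rw [← hn'] at this
        rw [this] at hdel
        omega
    · intro q hq
      simp only [Finset.mem_filter, Finset.mem_range] at hq ⊢
      refine ⟨⟨?_, ?_⟩, ?_⟩
      · rw [hQiff u hu' _ N]; exact hq.1
      · rw [hdec u hu' q, hq.2]; ring
      · simp [Nat.mul_add_mod, Nat.mod_eq_of_lt hu']
    · intro n hn
      simp only [Finset.mem_filter, Finset.mem_range] at hn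
      conv_rhs => rw [← Nat.div_add_mod n B]
      rw [hn.2]
    · intro q hq
      rw [Nat.mul_add_div hB, Nat.div_eq_of_lt hu', Nat.add_zero]
  -- limit of each piece
  have hQtop : ∀ u, Tendsto (fun N => Q u N) atTop atTop := by
    intro u
    apply Filter.tendsto_atTop_atTop.mpr
    intro M
    refine ⟨B * M, fun N hN => ?_⟩
    rw [hQ]
    simp only
    rw [Nat.le_div_iff_mul_le hB, Nat.mul_comm M B]
    omega
  have hQratio : ∀ u < B, Tendsto (fun N : ℕ => (Q u N : ℝ) / N) atTop (𝓝 (1 / B)) := by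
    intro u hu
    have h1 : Tendsto (fun N : ℕ => 1 / (B:ℝ) - 1 / N) atTop (𝓝 (1 / B)) := by
      simpa using tendsto_const_nhds.sub (tendsto_one_div_atTop_nhds_zero_nat (𝕜 := ℝ))
    have h2 : Tendsto (fun N : ℕ => 1 / (B:ℝ) + 1 / N) atTop (𝓝 (1 / B)) := by
      simpa using tendsto_const_nhds.add (tendsto_one_div_atTop_nhds_zero_nat (𝕜 := ℝ))
    have hBR : (0:ℝ) < B := by exact_mod_cast hB
    refine tendsto_of_tendsto_of_tendsto_of_le_of_le' h1 h2 ?_ ?_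
    · filter_upwards [eventually_ge_atTop 1] with N hN
      have hNR : (0:ℝ) < N := by exact_mod_cast hN
      have lowN : N ≤ B * Q u N + (B - 1) := by
        have hdm := Nat.div_add_mod (N + (B - 1 - u)) B
        have hmod : (N + (B - 1 - u)) % B < B := Nat.mod_lt _ hB
        have hQe : Q u N = (N + (B - 1 - u)) / B := rfl
        rw [hQe]
        omega
      have low : (N:ℝ) ≤ B * (Q u N : ℝ) + B := by
        have : (N:ℝ) ≤ ((B * Q u N + (B-1) : ℕ) : ℝ) := by exact_mod_cast lowN
        have hcast : ((B * Q u N + (B-1) : ℕ) : ℝ) = B * (Q u N : ℝ) + ((B - 1 : ℕ) : ℝ) := by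
          push_cast; ring
        have hBc : ((B - 1 : ℕ) : ℝ) ≤ (B : ℝ) := by exact_mod_cast Nat.sub_le B 1
        linarith [hcast ▸ this]
      have step : ((N:ℝ) - B) * N ≤ (B * (Q u N : ℝ)) * N :=
        mul_le_mul_of_nonneg_right (by linarith) hNR.le
      calc 1/(B:ℝ) - 1/N = ((N:ℝ) - B)/(B*N) := by first | (field_simp; ring) | field_simp
        _ ≤ (Q u N : ℝ)/N := by
            rw [div_le_div_iff₀ (by positivity) hNR]
            nlinarith [step]
    · filter_upwards [eventually_ge_atTop 1] with N hN
      have hNR : (0:ℝ) < N := by exact_mod_cast hN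
      have upN : B * Q u N ≤ N + B := by
        have h1 : Q u N = (N + (B - 1 - u)) / B := rfl
        have h2 : B * ((N + (B - 1 - u)) / B) ≤ N + (B - 1 - u) := Nat.mul_div_le _ _
        rw [h1]
        omega
      have up : B * (Q u N : ℝ) ≤ (N:ℝ) + B := by exact_mod_cast upN
      have step : (B * (Q u N : ℝ)) * N ≤ ((N:ℝ) + B) * N :=
        mul_le_mul_of_nonneg_right up hNR.le
      calc (Q u N : ℝ)/N ≤ ((N:ℝ) + B)/(B*N) := by
            rw [div_le_div_iff₀ hNR (by positivity)]
            nlinarith [step]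
        _ = 1/(B:ℝ) + 1/N := by first | (field_simp; ring) | field_simp
  have hterm : ∀ u ∈ Finset.range B, Tendsto (fun N : ℕ =>
      (((Finset.range (Q u N)).filter fun q => delta b (r' u) q = d - c u).card : ℝ) / N)
      atTop (𝓝 (μ (r' u) (d - c u) * (1 / B))) := by
    intro u hu
    have hu' := Finset.mem_range.mp hu
    have hcomp := (hμ (r' u) (d - c u)).comp (hQtop u)
    have hmul := hcomp.mul (hQratio u hu')
    refine hmul.congr' ?_
    have hev : ∀ᶠ N : ℕ in atTop, 1 ≤ Q u N := (hQtop u).eventually_ge_atTop 1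
    filter_upwards [hev] with N hQpos
    have hQne : ((Q u N : ℕ) : ℝ) ≠ 0 := by
      have : (0:ℕ) < Q u N := hQpos
      positivity
    show (_ / (Q u N : ℝ)) * ((Q u N : ℝ) / N) = _ / (N:ℝ)
    field_simp
  have hsum := tendsto_finset_sum (Finset.range B) hterm
  have hfinal : Tendsto (fun N : ℕ =>
      (((Finset.range N).filter fun n => delta b R n = d).card : ℝ) / N) atTop
      (𝓝 (∑ u ∈ Finset.range B, μ (r' u) (d - c u) * (1 / B))) := by
    refine hsum.congr fun N => ?_
    rw [← Finset.sum_div]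
    congr 1
    rw [count N]
    push_cast
    ring
  have := tendsto_nhds_unique (hμ R d) hfinal
  rw [this]
  exact Finset.sum_congr rfl fun u _ => mul_comm _ _

end SecA

section SecB
variable (hb : 2 ≤ b) (μ : ℕ → ℤ → ℝ) (hμ : HMU b μ)
include hb hμ

/-- total mass 1. -/
lemma mass_one (r : ℕ) : HasSum (μ r) 1 := by
  have hnn : ∀ d, 0 ≤ μ r d := mu_nonneg μ hμ r
  have hsummable : Summable (μ r) :=
    summable_of_sum_le hnn (fun S => partial_sum_le_one μ hμ r S)
  have hle : ∑' d, μ r d ≤ 1 :=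
    Summable.tsum_le_of_sum_le hsummable (fun S => partial_sum_le_one μ hμ r S)
  have hge : 1 ≤ ∑' d, μ r d := by
    -- lower bound 1 - (1/b)^j for every j
    have hbR : (1:ℝ) < b := by exact_mod_cast (by omega : 1 < b)
    have key : ∀ j : ℕ, 1 - ((1:ℝ)/b)^j ≤ ∑' d, μ r d := by
      intro j
      set t := r + 1 with ht
      have hrt : r < b ^ t := by
        calc r < 2 ^ r := Nat.lt_two_pow_self
          _ ≤ 2 ^ t := Nat.pow_le_pow_right (by omega) (by omega)
          _ ≤ b ^ t := Nat.pow_le_pow_left hb t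
      set S : Finset ℤ := Finset.Icc (-(((b:ℤ) - 1) * ((t:ℤ) + j))) r with hS
      have hsub : ∀ N : ℕ,
          (N:ℝ) - ((N / b ^ (t+j) + 1) * b ^ t : ℕ)
            ≤ (((Finset.range N).filter fun n => delta b r n ∈ S).card : ℝ) := by
        intro N
        have hsplit := Finset.card_filter_add_card_filter_not
          (s := Finset.range N) (p := fun n => delta b r n ∈ S)
        have hbadsub : ((Finset.range N).filter fun n => ¬ delta b r n ∈ S) ⊆
            ((Finset.range N).filter fun n => (n / b ^ t) % b ^ j = b ^ j - 1) := by
          intro n hn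
          simp only [Finset.mem_filter, hS, Finset.mem_Icc, not_and_or, not_le] at hn ⊢
          refine ⟨hn.1, ?_⟩
          rcases hn.2 with h | h
          · exact tail_digits hb t j r hrt n (by omega)
          · exact absurd (delta_le hb r n) (by omega)
        have hbad := (Finset.card_le_card hbadsub).trans (count_pattern hb t j N)
        have hcr : (Finset.range N).card = N := Finset.card_range N
        have hN : ((Finset.range N).filter fun n => delta b r n ∈ S).card
            ≥ N - (N / b ^ (t+j) + 1) * b ^ t := by omega
        have := hN
        push_cast
        have hc : (((Finset.range N).filter fun n => delta b r n ∈ S).card : ℝ)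
            ≥ ((N - (N / b ^ (t+j) + 1) * b ^ t : ℕ) : ℝ) := by exact_mod_cast this
        have : ((N - (N / b ^ (t+j) + 1) * b ^ t : ℕ) : ℝ)
            ≥ (N:ℝ) - ((N / b ^ (t+j) + 1) * b ^ t : ℕ) := by
          rcases Nat.le_total ((N / b ^ (t+j) + 1) * b ^ t) N with h | h
          · rw [Nat.cast_sub h]
          · have h1 : ((N - (N / b ^ (t+j) + 1) * b ^ t : ℕ) : ℝ) ≥ 0 := by positivity
            have h2 : ((N:ℕ):ℝ) ≤ (((N / b ^ (t+j) + 1) * b ^ t : ℕ) : ℝ) := by exact_mod_cast h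
            linarith
        push_cast at hc this ⊢
        linarith
      -- the partial sum over S is ≥ 1 - (1/b)^j
      have hlim := tendsto_card_mem μ hμ r S
      have hlower : Tendsto (fun N : ℕ =>
          1 - (1:ℝ)/(b:ℝ)^j - ((b:ℝ)^t + b^(t+j))/N) atTop (𝓝 (1 - (1:ℝ)/(b:ℝ)^j)) := by
        have h0 : Tendsto (fun N : ℕ => ((b:ℝ)^t + b^(t+j))/N) atTop (𝓝 0) :=
          tendsto_const_div_atTop_nhds_zero_nat _
        simpa using tendsto_const_nhds.sub h0
      have hSge : 1 - (1:ℝ)/(b:ℝ)^j ≤ ∑ d ∈ S, μ r d := by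
        refine le_of_tendsto_of_tendsto hlower hlim ?_
        filter_upwards [eventually_ge_atTop 1] with N h0
        have hNR : (0:ℝ) < N := by exact_mod_cast h0
        have h1 := hsub N
        have hdivle : ((N / b ^ (t+j) : ℕ) : ℝ) ≤ (N:ℝ) / (b:ℝ)^(t+j) := by
          have := Nat.cast_div_le (α := ℝ) (m := N) (n := b ^ (t+j))
          push_cast at this
          exact this
        have hbt : (0:ℝ) < (b:ℝ)^(t+j) := by positivity
        have hkey : (((N / b ^ (t+j) + 1) * b ^ t : ℕ) : ℝ) ≤ (N:ℝ)/(b:ℝ)^j + (b:ℝ)^t := by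
          have e1 : (N:ℝ)/(b:ℝ)^(t+j) * (b:ℝ)^t = (N:ℝ)/(b:ℝ)^j := by
            rw [pow_add]
            field_simp
          calc (((N / b ^ (t+j) + 1) * b ^ t : ℕ) : ℝ)
              = ((N / b ^ (t+j) : ℕ) : ℝ) * (b:ℝ)^t + (b:ℝ)^t := by push_cast; ring
            _ ≤ (N:ℝ)/(b:ℝ)^(t+j) * (b:ℝ)^t + (b:ℝ)^t := by
                have hp : (0:ℝ) ≤ (b:ℝ)^t := by positivity
                nlinarith [hdivle]
            _ = (N:ℝ)/(b:ℝ)^j + (b:ℝ)^t := by rw [e1]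
        have hcard_ge : (N:ℝ) - ((N:ℝ)/(b:ℝ)^j + (b:ℝ)^t)
            ≤ (((Finset.range N).filter fun n => delta b r n ∈ S).card : ℝ) := by
          linarith [h1, hkey]
        rw [le_div_iff₀ hNR]
        have e : (1 - 1/(b:ℝ)^j - ((b:ℝ)^t + (b:ℝ)^(t+j))/N) * N
            = (N:ℝ) - (N:ℝ)/(b:ℝ)^j - ((b:ℝ)^t + (b:ℝ)^(t+j)) := by
          field_simp
        rw [e]
        have hp2 : (0:ℝ) ≤ (b:ℝ)^(t+j) := by positivity
        linarith [hcard_ge]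
      calc 1 - ((1:ℝ)/b)^j = 1 - 1/(b:ℝ)^j := by rw [div_pow, one_pow]
        _ ≤ ∑ d ∈ S, μ r d := hSge
        _ ≤ ∑' d, μ r d := Summable.sum_le_tsum S (fun d _ => hnn d) hsummable
    have hj : Tendsto (fun j : ℕ => 1 - ((1:ℝ)/b)^j) atTop (𝓝 1) := by
      have : Tendsto (fun j : ℕ => ((1:ℝ)/b)^j) atTop (𝓝 0) := by
        apply tendsto_pow_atTop_nhds_zero_of_lt_one
        · positivity
        · rw [div_lt_one (by linarith)]; linarith
      simpa using tendsto_const_nhds.sub this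
    exact le_of_tendsto' hj key
  have : ∑' d, μ r d = 1 := le_antisymm hle hge
  exact this ▸ hsummable.hasSum

end SecB

/-- the one-digit decomposition data. -/
lemma hdec_digit (hb : 2 ≤ b) (r : ℕ) :
    ∀ u, u < b → ∀ q, delta b r (b * q + u)
      = delta b (if u + r % b < b then r / b else r / b + 1) q
        + (if u + r % b < b then ((r % b : ℕ) : ℤ) else ((r % b : ℕ) : ℤ) - b) := by
  intro u hu q
  set y := r % b with hy
  set r0 := r / b with hr0
  have hry : r = b * r0 + y := (Nat.div_add_mod r b).symm
  have hyb : y < b := Nat.mod_lt _ (by omega)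
  by_cases hcase : u + y < b
  · rw [if_pos hcase, if_pos hcase]
    have e1 : b * q + u + r = b * (q + r0) + (u + y) := by
      rw [hry, Nat.mul_add]
      omega
    simp only [delta, e1, digitSum_base_mul_add hb _ _ hcase,
      digitSum_base_mul_add hb _ _ hu]
    push_cast
    ring
  · rw [if_neg hcase, if_neg hcase]
    have e1 : b * q + u + r = b * (q + (r0 + 1)) + (u + y - b) := by
      rw [hry, Nat.mul_add, Nat.mul_add, Nat.mul_one]
      omega
    have hw : u + y - b < b := by omega
    simp only [delta, e1, digitSum_base_mul_add hb _ _ hw,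
      digitSum_base_mul_add hb _ _ hu]
    push_cast [Nat.cast_sub (by omega : b ≤ u + y)]
    ring


section SecC
variable (hb : 2 ≤ b) (μ : ℕ → ℤ → ℝ) (hμ : HMU b μ)
  (V : ℕ → ℝ)
  (hV : ∀ r : ℕ, HasSum (fun d : ℤ => (d : ℝ) ^ 2 * μ r d) (V r))
include hb hμ hV

lemma summable_id_mul (r : ℕ) : Summable (fun d : ℤ => (d:ℝ) * μ r d) := by
  have h2 : Summable (fun d : ℤ => (d:ℝ)^2 * μ r d) := (hV r).summable
  have h0 : Summable (μ r) := (mass_one hb μ hμ r).summable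
  have hbound : ∀ d : ℤ, |(d:ℝ) * μ r d| ≤ μ r d + (d:ℝ)^2 * μ r d := by
    intro d
    have hnn := mu_nonneg μ hμ r d
    rw [abs_mul, abs_of_nonneg hnn]
    have habs : |(d:ℝ)| ≤ 1 + (d:ℝ)^2 := by
      nlinarith [sq_abs (d:ℝ), sq_nonneg (|(d:ℝ)| - 1), abs_nonneg (d:ℝ)]
    nlinarith [hnn, habs]
  exact Summable.of_abs (Summable.of_nonneg_of_le
    (fun d => abs_nonneg _) hbound (h0.add h2))

omit hb hμ hV in
lemma hasSum_congr_fun {f g : ℤ → ℝ} {a : ℝ} (h : HasSum f a) (he : ∀ d, g d = f d) :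
    HasSum g a := by
  have : g = f := funext he
  rw [this]; exact h

omit hb hμ hV in
lemma hasSum_shift {g : ℤ → ℝ} {a : ℝ} (c : ℤ) (h : HasSum g a) :
    HasSum (fun d => g (d - c)) a :=
  (Equiv.subRight c).hasSum_iff.mpr h

/-- first-moment decomposition. -/
lemma mean_decomp {B : ℕ} (hB : 0 < B) (R : ℕ) (r' : ℕ → ℕ) (c : ℕ → ℤ)
    (hdec : ∀ u, u < B → ∀ q, delta b R (B * q + u) = delta b (r' u) q + c u) :
    HasSum (fun d : ℤ => (d:ℝ) * μ R d)
      (∑ u ∈ Finset.range B, (1 / (B:ℝ)) * ((∑' d : ℤ, (d:ℝ) * μ (r' u) d) + (c u : ℝ))) := by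
  have hterm : ∀ u, u < B → HasSum (fun d : ℤ => (d:ℝ) * μ (r' u) (d - c u))
      ((∑' d : ℤ, (d:ℝ) * μ (r' u) d) + (c u : ℝ)) := by
    intro u hu
    have h1 : HasSum (fun e : ℤ => (e:ℝ) * μ (r' u) e) (∑' d : ℤ, (d:ℝ) * μ (r' u) d) :=
      (summable_id_mul hb μ hμ V hV (r' u)).hasSum
    have h2 : HasSum (fun e : ℤ => ((c u : ℝ)) * μ (r' u) e) ((c u : ℝ) * 1) :=
      (mass_one hb μ hμ (r' u)).mul_left _
    have h3 := h1.add h2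
    have h4 := hasSum_shift (c u) h3
    rw [mul_one] at h4
    refine hasSum_congr_fun h4 fun d => ?_  -- may need arg fix
    push_cast
    ring
  have hsum : HasSum (fun d : ℤ => ∑ u ∈ Finset.range B, (1 / (B:ℝ)) * ((d:ℝ) * μ (r' u) (d - c u)))
      (∑ u ∈ Finset.range B, (1 / (B:ℝ)) * ((∑' d : ℤ, (d:ℝ) * μ (r' u) d) + (c u : ℝ))) :=
    hasSum_sum (fun u hu => ((hterm u (Finset.mem_range.mp hu)).mul_left (1 / (B:ℝ))))
  refine hasSum_congr_fun hsum fun d => ?_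
  rw [density_decomp μ hμ hB R r' c hdec d, Finset.mul_sum]
  exact Finset.sum_congr rfl fun u _ => by ring

/-- second-moment decomposition. -/
lemma var_decomp {B : ℕ} (hB : 0 < B) (R : ℕ) (r' : ℕ → ℕ) (c : ℕ → ℤ)
    (hdec : ∀ u, u < B → ∀ q, delta b R (B * q + u) = delta b (r' u) q + c u) :
    HasSum (fun d : ℤ => (d:ℝ)^2 * μ R d)
      (∑ u ∈ Finset.range B, (1 / (B:ℝ)) *
        (V (r' u) + 2 * (c u : ℝ) * (∑' d : ℤ, (d:ℝ) * μ (r' u) d) + (c u : ℝ)^2)) := by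
  have hterm : ∀ u, u < B → HasSum (fun d : ℤ => (d:ℝ)^2 * μ (r' u) (d - c u))
      (V (r' u) + 2 * (c u : ℝ) * (∑' d : ℤ, (d:ℝ) * μ (r' u) d) + (c u : ℝ)^2) := by
    intro u hu
    have h1 : HasSum (fun e : ℤ => (e:ℝ) * μ (r' u) e) (∑' d : ℤ, (d:ℝ) * μ (r' u) d) :=
      (summable_id_mul hb μ hμ V hV (r' u)).hasSum
    have h1' := h1.mul_left (2 * (c u : ℝ))
    have h2 : HasSum (fun e : ℤ => ((c u : ℝ))^2 * μ (r' u) e) ((c u : ℝ)^2 * 1) :=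
      (mass_one hb μ hμ (r' u)).mul_left _
    have h3 := ((hV (r' u)).add h1').add h2
    have h4 := hasSum_shift (c u) h3
    rw [mul_one] at h4
    refine hasSum_congr_fun h4 fun d => ?_
    push_cast
    ring
  have hsum : HasSum (fun d : ℤ => ∑ u ∈ Finset.range B, (1 / (B:ℝ)) * ((d:ℝ)^2 * μ (r' u) (d - c u)))
      (∑ u ∈ Finset.range B, (1 / (B:ℝ)) *
        (V (r' u) + 2 * (c u : ℝ) * (∑' d : ℤ, (d:ℝ) * μ (r' u) d) + (c u : ℝ)^2)) :=
    hasSum_sum (fun u hu => ((hterm u (Finset.mem_range.mp hu)).mul_left (1 / (B:ℝ))))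
  refine hasSum_congr_fun hsum fun d => ?_
  rw [density_decomp μ hμ hB R r' c hdec d, Finset.mul_sum]
  exact Finset.sum_congr rfl fun u _ => by ring


omit hV in
lemma mu_zero_fun (f : ℤ → ℝ) (hf0 : f 0 = 0)
    (g : ℤ → ℝ) (hg : ∀ d, g d = f d * μ 0 d) : HasSum g 0 := by
  have : g = fun _ => 0 := by
    funext d
    rw [hg]
    by_cases hd : d = 0
    · rw [hd, hf0, zero_mul]
    · rw [mu_eq_zero μ hμ 0 d ?_, mul_zero]
      intro n
      simp only [delta, Nat.add_zero, sub_self]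
      exact fun h => hd h.symm
  rw [this]
  exact hasSum_zero

omit hb hμ hV in
/-- helper: the two filters appearing in digit decompositions. -/
lemma filter_card_lt (y : ℕ) (hy : y < b) :
    ((Finset.range b).filter fun u => u + y < b).card = b - y ∧
    ((Finset.range b).filter fun u => ¬ (u + y < b)).card = y := by
  have h1 : (Finset.range b).filter (fun u => u + y < b) = Finset.range (b - y) := by
    ext u
    simp only [Finset.mem_filter, Finset.mem_range]
    omega
  have h2 : (Finset.range b).filter (fun u => ¬ (u + y < b)) = Finset.Ico (b - y) b := by
    ext u
    simp only [Finset.mem_filter, Finset.mem_range, Finset.mem_Ico]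
    omega
  rw [h1, h2, Finset.card_range, Nat.card_Ico]
  omega

lemma mean_zero : ∀ r : ℕ, (∑' d : ℤ, (d:ℝ) * μ r d) = 0 := by
  intro r
  induction r using Nat.strong_induction_on with
  | _ r ih =>
    rcases Nat.eq_zero_or_pos r with hr0 | hrpos
    · subst hr0
      exact (mu_zero_fun hb μ hμ (fun d => (d:ℝ)) (by norm_num) _ (fun d => rfl)).tsum_eq
    · have hBpos : 0 < b := by omega
      set y := r % b with hy
      set r0 := r / b with hr0
      have hyb : y < b := Nat.mod_lt _ hBpos
      set rr : ℕ → ℕ := fun u => if u + y < b then r0 else r0 + 1 with hrr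
      set cc : ℕ → ℤ := fun u => if u + y < b then ((y : ℕ) : ℤ) else ((y : ℕ) : ℤ) - b with hcc
      have hE := (mean_decomp hb μ hμ V hV hBpos r rr cc (hdec_digit hb r)).tsum_eq
      have hccsum : ∑ u ∈ Finset.range b, ((cc u : ℝ)) = 0 := by
        have : ∀ u : ℕ, ((cc u : ℝ)) = if u + y < b then ((y:ℝ)) else ((y:ℝ) - b) := by
          intro u
          by_cases h : u + y < b <;> simp [hcc, h]
        simp only [this]
        rw [Finset.sum_ite, Finset.sum_const, Finset.sum_const,
          (filter_card_lt y hyb).1, (filter_card_lt y hyb).2]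
        have hc : ((b - y : ℕ) : ℝ) = (b:ℝ) - y := by
          push_cast [Nat.cast_sub (by omega : y ≤ b)]
          ring
        simp only [nsmul_eq_mul, hc]
        ring
      rcases Nat.lt_or_ge r 2 with hr1 | hr2
      · -- r = 1
        have hre : r = 1 := by omega
        subst hre
        have hy1 : y = 1 := by rw [hy]; exact Nat.mod_eq_of_lt (by omega)
        have hr00 : r0 = 0 := by rw [hr0]; exact Nat.div_eq_of_lt (by omega)
        have hEsum : ∑ u ∈ Finset.range b, (1 / (b:ℝ)) * ((∑' d : ℤ, (d:ℝ) * μ (rr u) d) + (cc u : ℝ))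
            = (1/(b:ℝ)) * (∑' d : ℤ, (d:ℝ) * μ 1 d) := by
          have hterm : ∀ u : ℕ, (1 / (b:ℝ)) * ((∑' d : ℤ, (d:ℝ) * μ (rr u) d) + (cc u : ℝ))
              = (if u + y < b then (1/(b:ℝ)) * ((∑' d : ℤ, (d:ℝ) * μ 0 d) + (y:ℝ))
                 else (1/(b:ℝ)) * ((∑' d : ℤ, (d:ℝ) * μ 1 d) + ((y:ℝ) - b))) := by
            intro u
            by_cases h : u + y < b <;> simp [hrr, hcc, h, hr00]
          simp only [hterm]
          rw [Finset.sum_ite, Finset.sum_const, Finset.sum_const,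
            (filter_card_lt y hyb).1, (filter_card_lt y hyb).2]
          have hE0 : (∑' d : ℤ, (d:ℝ) * μ 0 d) = 0 := ih 0 (by omega)
          rw [hE0]
          simp only [nsmul_eq_mul, hy1]
          have hc : ((b - 1 : ℕ) : ℝ) = (b:ℝ) - 1 := by
            rw [Nat.cast_pred (by omega)]
          rw [hc]
          push_cast
          ring
        rw [hEsum] at hE
        have hbne : (b:ℝ) ≠ 0 := by positivity
        have hb1 : (1:ℝ) < (b:ℝ) := by exact_mod_cast (by omega : 1 < b)
        set E1 := ∑' d : ℤ, (d:ℝ) * μ 1 d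
        have : E1 * ((b:ℝ) - 1) = 0 := by
          field_simp at hE
          linear_combination hE
        rcases mul_eq_zero.mp this with h | h
        · exact h
        · exfalso; linarith
      · -- r ≥ 2
        have hEzero : ∀ u < b, (∑' d : ℤ, (d:ℝ) * μ (rr u) d) = 0 := by
          intro u hu
          have h2r0 : 2 * r0 ≤ b * r0 := Nat.mul_le_mul_right r0 hb
          have hry : r = b * r0 + y := (Nat.div_add_mod r b).symm
          by_cases h : u + y < b
          · have : rr u = r0 := by simp [hrr, h]
            rw [this]
            exact ih r0 (by omega)
          · have : rr u = r0 + 1 := by simp [hrr, h]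
            rw [this]
            have hy1 : 1 ≤ y := by omega
            exact ih (r0 + 1) (by omega)
        rw [hE]
        have : ∀ u ∈ Finset.range b,
            (1 / (b:ℝ)) * ((∑' d : ℤ, (d:ℝ) * μ (rr u) d) + (cc u : ℝ))
              = (1/(b:ℝ)) * (cc u : ℝ) := by
          intro u hu
          rw [hEzero u (Finset.mem_range.mp hu), zero_add]
        rw [Finset.sum_congr rfl this, ← Finset.mul_sum, hccsum, mul_zero]

/-- the clean variance decomposition. -/
lemma var_formula {B : ℕ} (hB : 0 < B) (R : ℕ) (r' : ℕ → ℕ) (c : ℕ → ℤ)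
    (hdec : ∀ u, u < B → ∀ q, delta b R (B * q + u) = delta b (r' u) q + c u) :
    V R = ∑ u ∈ Finset.range B, (1 / (B:ℝ)) * (V (r' u) + (c u : ℝ)^2) := by
  have h := var_decomp hb μ hμ V hV hB R r' c hdec
  have heq : ∀ u ∈ Finset.range B,
      (1 / (B:ℝ)) * (V (r' u) + 2 * (c u : ℝ) * (∑' d : ℤ, (d:ℝ) * μ (r' u) d) + (c u : ℝ)^2)
        = (1 / (B:ℝ)) * (V (r' u) + (c u : ℝ)^2) := by
    intro u _
    rw [mean_zero hb μ hμ V hV (r' u)]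
    ring
  rw [Finset.sum_congr rfl heq] at h
  exact (hV R).unique h

lemma V_zero : V 0 = 0 :=
  (hV 0).unique (mu_zero_fun hb μ hμ (fun d => (d:ℝ)^2)
    (by norm_num) _ (fun d => rfl))

lemma V_one : V 1 = b := by
  have h := var_formula hb μ hμ V hV (by omega : 0 < b) 1
    (fun u => if u + 1 % b < b then 1 / b else 1 / b + 1)
    (fun u => if u + 1 % b < b then ((1 % b : ℕ) : ℤ) else ((1 % b : ℕ) : ℤ) - b)
    (hdec_digit hb 1)
  have h1m : 1 % b = 1 := Nat.mod_eq_of_lt (by omega)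
  have h1d : 1 / b = 0 := Nat.div_eq_of_lt (by omega)
  have hterm : ∀ u : ℕ,
      (1 / (b:ℝ)) * (V (if u + 1 % b < b then 1 / b else 1 / b + 1)
        + (((if u + 1 % b < b then ((1 % b : ℕ) : ℤ) else ((1 % b : ℕ) : ℤ) - b) : ℤ) : ℝ)^2)
      = if u + 1 < b then (1/(b:ℝ)) * (V 0 + 1)
        else (1/(b:ℝ)) * (V 1 + ((1:ℝ) - b)^2) := by
    intro u
    by_cases hc : u + 1 < b
    · rw [if_pos (by omega : u + 1 % b < b)]
      rw [if_pos (by omega : u + 1 % b < b), if_pos hc, h1d, h1m]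
      norm_num
    · rw [if_neg (by omega : ¬ (u + 1 % b < b)), if_neg (by omega : ¬ (u + 1 % b < b)),
        if_neg hc, h1d, h1m]
      push_cast
      ring_nf
  rw [Finset.sum_congr rfl (fun u _ => hterm u)] at h
  rw [Finset.sum_ite, Finset.sum_const, Finset.sum_const,
    (filter_card_lt 1 (by omega)).1,
    (filter_card_lt 1 (by omega)).2] at h
  rw [V_zero hb μ hμ V hV] at h
  have hc : ((b - 1 : ℕ) : ℝ) = (b:ℝ) - 1 := by rw [Nat.cast_pred (by omega)]
  simp only [nsmul_eq_mul, hc, Nat.cast_one] at h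
  have hbne : (b:ℝ) ≠ 0 := by positivity
  have hb1 : (2:ℝ) ≤ (b:ℝ) := by exact_mod_cast hb
  field_simp at h
  nlinarith [h]

end SecC

/-- the block decomposition data. -/
lemma hdec_block (hb : 2 ≤ b) (m rhat : ℕ) :
    ∀ u, u < b ^ m → ∀ q, delta b (b ^ m * rhat + (b ^ m - 1)) (b ^ m * q + u)
      = delta b (if u = 0 then rhat else rhat + 1) q
        + (if u = 0 then ((m * (b-1) : ℕ) : ℤ)
           else ((digitSum b (u-1) : ℤ) - (digitSum b u : ℤ))) := by
  intro u hu q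
  have hB : 1 ≤ b ^ m := Nat.one_le_pow _ _ (by omega)
  by_cases hu0 : u = 0
  · subst hu0
    rw [if_pos rfl, if_pos rfl]
    have e1 : b ^ m * q + 0 + (b ^ m * rhat + (b ^ m - 1))
        = b ^ m * (q + rhat) + (b ^ m - 1) := by
      rw [Nat.mul_add]
      omega
    simp only [delta, e1,
      digitSum_pow_mul_add hb m (q + rhat) (b ^ m - 1) (by omega),
      digitSum_pow_mul_add hb m q 0 (by omega),
      digitSum_pow_sub_one hb m]
    simp [digitSum]
    ring
  · rw [if_neg hu0, if_neg hu0]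
    have e1 : b ^ m * q + u + (b ^ m * rhat + (b ^ m - 1))
        = b ^ m * (q + (rhat + 1)) + (u - 1) := by
      rw [Nat.mul_add, Nat.mul_add, Nat.mul_one]
      omega
    simp only [delta, e1,
      digitSum_pow_mul_add hb m (q + (rhat + 1)) (u - 1) (by omega),
      digitSum_pow_mul_add hb m q u hu]
    push_cast
    ring


theorem main (hb : 2 ≤ b)
    (μ : ℕ → ℤ → ℝ) (hμ : HMU b μ)
    (V : ℕ → ℝ)
    (hV : ∀ r : ℕ, HasSum (fun d : ℤ => (d : ℝ) ^ 2 * μ r d) (V r))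
    (rhat : ℕ) (m : ℕ) (hm : 1 ≤ m) :
    V (b ^ m * rhat + (b ^ m - 1)) =
      (1 / (b : ℝ) ^ m) * V rhat + (1 - 1 / (b : ℝ) ^ m) * V (rhat + 1) +
        (b : ℝ) - 1 / (b : ℝ) ^ (m - 1) ∧
    V (b ^ m - 1) = 2 * (b : ℝ) - 2 / (b : ℝ) ^ (m - 1) := by
  obtain ⟨m', rfl⟩ : ∃ m', m = m' + 1 := ⟨m - 1, by omega⟩
  set m := m' + 1
  have hB : 0 < b ^ m := Nat.pow_pos (by omega)
  have hBR : (0:ℝ) < (b:ℝ)^m := by positivity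
  have hbR : (0:ℝ) < (b:ℝ) := by exact_mod_cast (by omega : 0 < b)
  have key : ∀ rh : ℕ, V (b ^ m * rh + (b ^ m - 1)) =
      (1 / (b : ℝ) ^ m) * V rh + (1 - 1 / (b : ℝ) ^ m) * V (rh + 1) +
        (b : ℝ) - 1 / (b : ℝ) ^ (m - 1) := by
    intro rh
    have h := var_formula hb μ hμ V hV hB (b ^ m * rh + (b ^ m - 1)) _ _ (hdec_block hb m rh)
    rw [h]
    -- split off u = 0
    have hsplit : Finset.range (b ^ m) = Finset.range ((b ^ m - 1) + 1) := by
      congr 1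
      omega
    rw [hsplit, Finset.sum_range_succ']
    simp only [eq_self_iff_true, if_true]
    have hne : ∀ i : ℕ, (i + 1 = 0) = False := by intro i; simp
    have hterm : ∀ i ∈ Finset.range (b ^ m - 1),
        (1 / ((b ^ m : ℕ):ℝ)) * (V (if i + 1 = 0 then rh else rh + 1)
          + (((if i + 1 = 0 then ((m * (b-1) : ℕ) : ℤ)
             else ((digitSum b (i+1-1) : ℤ) - (digitSum b (i+1) : ℤ))) : ℤ) : ℝ)^2)
        = (1 / ((b:ℝ)^m)) * (V (rh + 1)
            + ((digitSum b (i+1) : ℝ) - (digitSum b i : ℝ))^2) := by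
      intro i _
      rw [if_neg (by omega), if_neg (by omega)]
      have : i + 1 - 1 = i := by omega
      rw [this]
      have hc : ((b ^ m : ℕ) : ℝ) = (b:ℝ)^m := by push_cast; ring
      rw [hc]
      congr 1
      push_cast
      ring
    rw [Finset.sum_congr rfl hterm]
    rw [← Finset.mul_sum, Finset.sum_add_distrib, Finset.sum_const, Finset.card_range,
      sum_sq_delta_one hb m, nsmul_eq_mul]
    have hc1 : ((b ^ m - 1 : ℕ) : ℝ) = (b:ℝ)^m - 1 := by
      rw [Nat.cast_pred hB]
      push_cast
      ring
    have hc2 : ((b ^ m : ℕ) : ℝ) = (b:ℝ)^m := by push_cast; ring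
    have hc3 : (((m * (b-1) : ℕ) : ℤ) : ℝ) = (m:ℝ) * ((b:ℝ) - 1) := by
      push_cast [Nat.cast_pred (show 0 < b by omega)]
      ring
    rw [hc1, hc2, hc3]
    have hm1 : m - 1 = m' := by omega
    rw [hm1]
    have hpow : (b:ℝ)^m = (b:ℝ)^m' * b := by
      rw [show m = m' + 1 from rfl, pow_succ]
    have hpm : (0:ℝ) < (b:ℝ)^m' := by positivity
    field_simp
    rw [hpow]
    ring
  refine ⟨key rhat, ?_⟩
  have h0 := key 0
  rw [Nat.mul_zero, Nat.zero_add] at h0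
  rw [h0, V_zero hb μ hμ V hV, V_one hb μ hμ V hV]
  have hm1 : m - 1 = m' := by omega
  rw [hm1]
  have hpow : (b:ℝ)^m = (b:ℝ)^m' * b := by
    rw [show m = m' + 1 from rfl, pow_succ]
  have hpm : (0:ℝ) < (b:ℝ)^m' := by positivity
  field_simp
  rw [hpow]
  ring


end VarAux

/-- **Lemma (variance with a rightmost block of `(b-1)`'s).** For every `r̂ ∈ ℕ` and `m ≥ 1`,
`Var(μ^(b^m·r̂+b^m-1)) = (1/b^m)·Var(μ^(r̂)) + (1-1/b^m)·Var(μ^(r̂+1)) + b - 1/b^(m-1)`;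
in particular `Var(μ^(b^m-1)) = 2b - 2/b^(m-1)`. -/
theorem variance_block_b_minus_one (b : ℕ) (hb : 2 ≤ b)
    (μ : ℕ → ℤ → ℝ)
    (hμ : ∀ (r : ℕ) (d : ℤ),
      Tendsto (fun N : ℕ =>
        (((Finset.range N).filter fun n => delta b r n = d).card : ℝ) / N)
        atTop (𝓝 (μ r d)))
    (V : ℕ → ℝ)
    (hV : ∀ r : ℕ, HasSum (fun d : ℤ => (d : ℝ) ^ 2 * μ r d) (V r))
    (rhat : ℕ) (m : ℕ) (hm : 1 ≤ m) :
    V (b ^ m * rhat + (b ^ m - 1)) =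
      (1 / (b : ℝ) ^ m) * V rhat + (1 - 1 / (b : ℝ) ^ m) * V (rhat + 1) +
        (b : ℝ) - 1 / (b : ℝ) ^ (m - 1) ∧
    V (b ^ m - 1) = 2 * (b : ℝ) - 2 / (b : ℝ) ^ (m - 1) :=
  VarAux.main hb μ hμ V hV rhat m hm
end
end

section
/- For every r̂ ∈ ℕ and every integer m ≥ 1, Var(μ^(b^m·r̂ + 1)) = (1 − 1/b^m)·Var(μ^(r̂)) + (1/b^m)·Var(μ^(r̂+1)) + b − 1/b^{m−1}. -/
open Filter Topology MeasureTheory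

noncomputable section

open Finset

set_option linter.unusedSectionVars false
set_option maxHeartbeats 1000000

/-- First moment (mean) of the measure `μ r`. -/
noncomputable def Emom (μ : ℕ → ℤ → ℝ) (r : ℕ) : ℝ := ∑' d : ℤ, (d : ℝ) * μ r d

section digits
variable {b : ℕ} (hb : 2 ≤ b)
include hb

lemma ds_eq (n : ℕ) : digitSum b n = n % b + digitSum b (n / b) := by
  rcases Nat.eq_zero_or_pos n with h | h
  · simp [h, digitSum]
  · rw [digitSum, Nat.digits_def' (by omega : 1 < b) h]
    simp [digitSum]

lemma ds_one : digitSum b 1 = 1 := by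
  rw [ds_eq hb 1, Nat.mod_eq_of_lt (by omega), Nat.div_eq_of_lt (by omega)]
  simp [digitSum]

lemma ds_mul_add (q : ℕ) {c : ℕ} (hc : c < b) : digitSum b (b * q + c) = digitSum b q + c := by
  rw [ds_eq hb (b * q + c)]
  have h1 : (b * q + c) % b = c := by
    rw [Nat.mul_add_mod]; exact Nat.mod_eq_of_lt hc
  have h2 : (b * q + c) / b = q := by
    rw [Nat.mul_add_div (by omega)]
    simp [Nat.div_eq_of_lt hc]
  rw [h1, h2]; omega

lemma ds_pow_mul_add (m q : ℕ) : ∀ {c : ℕ}, c < b ^ m →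
    digitSum b (b ^ m * q + c) = digitSum b q + digitSum b c := by
  induction m generalizing q with
  | zero =>
    intro c hc
    simp only [pow_zero] at hc
    have : c = 0 := by omega
    simp [this, digitSum]
  | succ m ih =>
    intro c hc
    have hc0 : c % b < b := Nat.mod_lt _ (by omega)
    have key : b ^ (m + 1) * q + c = b * (b ^ m * q + c / b) + c % b := by
      have := Nat.div_add_mod c b
      have e : b * (b ^ m * q + c / b) = b ^ (m+1) * q + b * (c / b) := by ring
      omega
    have hdb : c / b < b ^ m := by
      apply Nat.div_lt_of_lt_mul
      rw [← pow_succ']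
      exact hc
    rw [key, ds_mul_add hb _ hc0, ih q hdb, ds_eq hb c]
    omega

lemma ds_pow (m : ℕ) : digitSum b (b ^ m) = 1 := by
  have h := ds_pow_mul_add hb m 1 (c := 0) (by positivity)
  simp only [mul_one, add_zero] at h
  rw [h, ds_one hb]
  simp [digitSum]

lemma ds_pow_sub_one (m : ℕ) : digitSum b (b ^ m - 1) = m * (b - 1) := by
  induction m with
  | zero => simp [digitSum]
  | succ m ih =>
    have hpos : 1 ≤ b ^ m := Nat.one_le_pow _ _ (by omega)
    obtain ⟨j, hj⟩ := Nat.exists_eq_add_of_le hpos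
    have e1 : b ^ (m + 1) = b * j + b := by rw [pow_succ, hj]; ring
    have e2 : b ^ m - 1 = j := by omega
    have e3 : b ^ (m + 1) - 1 = b * j + (b - 1) := by omega
    rw [e3, ds_mul_add hb _ (by omega : b - 1 < b), ← e2, ih]
    have : (m + 1) * (b - 1) = m * (b - 1) + (b - 1) := by ring
    omega

lemma ds_mod_div (J : ℕ) : ∀ x : ℕ, digitSum b x = digitSum b (x % b ^ J) + digitSum b (x / b ^ J) := by
  induction J with
  | zero => intro x; simp [digitSum, Nat.mod_one]
  | succ J ih =>
    intro x
    have h1 : x % b ^ (J + 1) = b * (x / b % b ^ J) + x % b := by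
      rw [pow_succ']
      rw [Nat.mod_mul]
      ring
    have h2 : x / b ^ (J + 1) = x / b / b ^ J := by
      rw [Nat.div_div_eq_div_mul, ← pow_succ']
    rw [h1, h2, ds_mul_add hb _ (Nat.mod_lt _ (by omega)), ds_eq hb x, ih (x / b)]
    omega

lemma ds_le {J c : ℕ} (hc : c < b ^ J) : digitSum b c ≤ (b - 1) * J := by
  induction J generalizing c with
  | zero =>
    simp only [pow_zero] at hc
    have : c = 0 := by omega
    simp [this, digitSum]
  | succ J ih =>
    have h1 : c / b < b ^ J := by
      apply Nat.div_lt_of_lt_mul; rw [← pow_succ']; exact hc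
    have h2 := ih h1
    have h3 : c % b < b := Nat.mod_lt _ (by omega)
    have h4 : (b - 1) * (J + 1) = (b - 1) * J + (b - 1) := by ring
    rw [ds_eq hb c]
    omega


lemma ds_zero : digitSum b 0 = 0 := by simp [digitSum]

lemma delta1_low (q : ℕ) {e : ℕ} (he : e + 1 < b) : delta b 1 (b * q + e) = 1 := by
  unfold delta
  rw [show b * q + e + 1 = b * q + (e + 1) by ring, ds_mul_add hb q he,
    ds_mul_add hb q (by omega : e < b)]
  push_cast; ring

lemma delta1_high (q : ℕ) : delta b 1 (b * q + (b - 1)) = delta b 1 q - ((b : ℤ) - 1) := by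
  unfold delta
  have e1 : b * q + (b - 1) + 1 = b * (q + 1) + 0 := by
    have : b * (q + 1) = b * q + b := by ring
    omega
  rw [e1, ds_mul_add hb (q + 1) (by omega : 0 < b), ds_mul_add hb q (by omega : b - 1 < b)]
  push_cast [Nat.cast_sub (by omega : 1 ≤ b)]; ring

lemma telescope (M : ℕ) : ∑ c ∈ range M, delta b 1 c = (digitSum b M : ℤ) := by
  induction M with
  | zero => simp [digitSum]
  | succ M ih => rw [Finset.sum_range_succ, ih]; unfold delta; ring

omit hb in
lemma sum_range_mul_s14 {M : Type*} [AddCommMonoid M] (K Q : ℕ) (F : ℕ → M) :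
    ∑ n ∈ range (K * Q), F n = ∑ q ∈ range Q, ∑ c ∈ range K, F (K * q + c) := by
  induction Q with
  | zero => simp
  | succ Q ih =>
    rw [Finset.sum_range_succ, ← ih, show K * (Q + 1) = K * Q + K by ring,
      Finset.sum_range_add]

lemma delta1_one : delta b 1 0 = 1 := by
  unfold delta; rw [zero_add, ds_one hb, ds_zero hb]; simp

lemma Sfull (m : ℕ) :
    ∑ c ∈ range (b ^ m), (delta b 1 c) ^ 2 = (b : ℤ) ^ (m + 1) - b + 1 - 2 * m * (b - 1) := by
  induction m with
  | zero =>
    simp only [pow_zero, Finset.range_one, Finset.sum_singleton, delta1_one hb]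
    push_cast; ring
  | succ m ih =>
    have key : ∑ c ∈ range (b ^ (m + 1)), (delta b 1 c) ^ 2
        = ∑ q ∈ range (b ^ m), ∑ e ∈ range b, (delta b 1 (b * q + e)) ^ 2 := by
      rw [← sum_range_mul_s14 b (b ^ m) (fun n => (delta b 1 n) ^ 2), ← pow_succ']
    rw [key]
    have inner : ∀ q, ∑ e ∈ range b, (delta b 1 (b * q + e)) ^ 2
        = ((b : ℤ) - 1) + (delta b 1 q - ((b : ℤ) - 1)) ^ 2 := by
      intro q
      have hb1 : b = (b - 1) + 1 := by omega
      rw [hb1, Finset.sum_range_succ, ← hb1, delta1_high hb q]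
      have he : ∀ e ∈ range (b - 1), (delta b 1 (b * q + e)) ^ 2 = 1 := by
        intro e he
        have : e + 1 < b := by have := Finset.mem_range.mp he; omega
        rw [delta1_low hb q this]; norm_num
      rw [Finset.sum_congr rfl he, Finset.sum_const, Finset.card_range]
      have : ((b - 1 : ℕ) : ℤ) = (b : ℤ) - 1 := by
        push_cast [Nat.cast_sub (by omega : 1 ≤ b)]; ring
      rw [nsmul_eq_mul, this]; ring
    rw [Finset.sum_congr rfl (fun q _ => inner q), Finset.sum_add_distrib,
      Finset.sum_const, Finset.card_range]
    have expand : ∑ q ∈ range (b ^ m), (delta b 1 q - ((b:ℤ) - 1)) ^ 2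
        = (∑ q ∈ range (b ^ m), (delta b 1 q) ^ 2)
          - 2 * ((b:ℤ) - 1) * (∑ q ∈ range (b ^ m), delta b 1 q)
          + (b ^ m : ℕ) * ((b:ℤ) - 1) ^ 2 := by
      have e : ∀ q : ℕ, (delta b 1 q - ((b:ℤ) - 1)) ^ 2
          = (delta b 1 q) ^ 2 - 2 * ((b:ℤ) - 1) * delta b 1 q + ((b:ℤ) - 1) ^ 2 :=
        fun q => by ring
      rw [Finset.sum_congr rfl (fun q _ => e q), Finset.sum_add_distrib,
        Finset.sum_sub_distrib, ← Finset.mul_sum, Finset.sum_const, Finset.card_range,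
        nsmul_eq_mul]
    rw [expand, ih, telescope hb, ds_pow hb]
    push_cast
    ring

lemma delta1_top (m : ℕ) : delta b 1 (b ^ m - 1) = 1 - m * ((b : ℤ) - 1) := by
  unfold delta
  have h1 : b ^ m - 1 + 1 = b ^ m := Nat.succ_pred_eq_of_pos (pow_pos (by omega) _)
  rw [h1, ds_pow hb, ds_pow_sub_one hb]
  push_cast [Nat.cast_sub (by omega : 1 ≤ b)]; ring

lemma Spart (m : ℕ) :
    ∑ c ∈ range (b ^ m - 1), (delta b 1 c) ^ 2
      = (b : ℤ) ^ (m + 1) - b - (m * ((b : ℤ) - 1)) ^ 2 := by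
  have h1 : b ^ m = (b ^ m - 1) + 1 :=
    (Nat.succ_pred_eq_of_pos (pow_pos (by omega) _)).symm
  have h2 := Sfull hb m
  rw [h1, Finset.sum_range_succ, delta1_top hb m] at h2
  have h3 : (1 - (m : ℤ) * ((b : ℤ) - 1)) ^ 2
      = 1 - 2 * m * ((b:ℤ) - 1) + (m * ((b:ℤ)-1))^2 := by ring
  linarith [h2]

lemma delta_digit {a : ℕ} (ha : a < b) (rh q : ℕ) {c : ℕ} (hc : c < b) :
    delta b (b * rh + a) (b * q + c)
      = if c + a < b then delta b rh q + a else delta b (rh + 1) q + ((a : ℤ) - b) := by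
  unfold delta
  rw [ds_mul_add hb q hc]
  by_cases h : c + a < b
  · rw [if_pos h, show b * q + c + (b * rh + a) = b * (q + rh) + (c + a) by ring,
      ds_mul_add hb _ h]
    push_cast; ring
  · rw [if_neg h]
    have h2 : c + a - b < b := by omega
    have h3 : b * q + c + (b * rh + a) = b * (q + rh + 1) + (c + a - b) := by
      have : b * (q + rh + 1) = b * q + b * rh + b := by ring
      omega
    rw [h3, ds_mul_add hb _ h2, show q + rh + 1 = q + (rh + 1) by ring]
    push_cast [Nat.cast_sub (by omega : b ≤ c + a)]
    ring

lemma delta_block (m : ℕ) (rh q : ℕ) {c : ℕ} (hc : c < b ^ m) :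
    delta b (b ^ m * rh + 1) (b ^ m * q + c)
      = if c = b ^ m - 1 then delta b (rh + 1) q - m * ((b : ℤ) - 1)
        else delta b rh q + delta b 1 c := by
  have hbm : 0 < b ^ m := pow_pos (by omega) _
  unfold delta
  rw [ds_pow_mul_add hb m q hc]
  by_cases h : c = b ^ m - 1
  · rw [if_pos h, h]
    have h3 : b ^ m * q + (b ^ m - 1) + (b ^ m * rh + 1) = b ^ m * (q + rh + 1) + 0 := by
      have : b ^ m * (q + rh + 1) = b ^ m * q + b ^ m * rh + b ^ m := by ring
      omega
    rw [h3, ds_pow_mul_add hb m _ hbm, ds_zero hb, ds_pow_sub_one hb,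
      show q + rh + 1 = q + (rh + 1) by ring]
    push_cast [Nat.cast_sub (by omega : 1 ≤ b)]
    ring
  · rw [if_neg h]
    have h2 : c + 1 < b ^ m := by omega
    rw [show b ^ m * q + c + (b ^ m * rh + 1) = b ^ m * (q + rh) + (c + 1) by ring,
      ds_pow_mul_add hb m _ h2]
    push_cast; ring

omit hb in
lemma card_decomp (K Q : ℕ) (P : ℕ → Prop) [DecidablePred P] :
    ((range (K * Q)).filter P).card
      = ∑ c ∈ range K, ((range Q).filter fun q => P (K * q + c)).card := by
  rw [Finset.card_filter]
  rw [sum_range_mul_s14 K Q (fun n => if P n then 1 else 0), Finset.sum_comm]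
  exact Finset.sum_congr rfl fun c _ => (Finset.card_filter _ _).symm

omit hb in
lemma card_fiber (r N : ℕ) (S : Finset ℤ) :
    ((range N).filter fun n => delta b r n ∈ S).card
      = ∑ d ∈ S, ((range N).filter fun n => delta b r n = d).card := by
  rw [Finset.card_eq_sum_card_fiberwise
    (s := (range N).filter fun n => delta b r n ∈ S)
    (f := fun n => delta b r n) (t := S)
    (fun x hx => (Finset.mem_filter.mp (Finset.mem_coe.mp hx)).2)]
  refine Finset.sum_congr rfl fun d hd => ?_
  rw [Finset.filter_filter]
  congr 1
  apply Finset.filter_congr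
  intro n _
  constructor
  · rintro ⟨_, h⟩; exact h
  · intro h; exact ⟨by simp only [h]; exact hd, h⟩

lemma abs_delta_le (r n j : ℕ) (h : n % b ^ j + r < b ^ j) :
    |delta b r n| ≤ ((b - 1) * j : ℕ) := by
  have hK0 : 0 < b ^ j := pow_pos (by omega) _
  have hdm := Nat.div_add_mod n (b ^ j)
  have e0 : n + r = b ^ j * (n / b ^ j) + (n % b ^ j + r) := by omega
  have e1 : (n + r) % b ^ j = n % b ^ j + r := by
    rw [e0, Nat.mul_add_mod, Nat.mod_eq_of_lt h]
  have e2 : (n + r) / b ^ j = n / b ^ j := by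
    rw [e0, Nat.mul_add_div hK0, Nat.div_eq_of_lt h, add_zero]
  have d1 := ds_mod_div hb j (n + r)
  have d2 := ds_mod_div hb j n
  rw [e1, e2] at d1
  have key : delta b r n
      = (digitSum b (n % b ^ j + r) : ℤ) - digitSum b (n % b ^ j) := by
    unfold delta; rw [d1, d2]; push_cast; ring
  have b1 : digitSum b (n % b ^ j + r) ≤ (b - 1) * j := ds_le hb h
  have b2 : digitSum b (n % b ^ j) ≤ (b - 1) * j := ds_le hb (Nat.mod_lt _ hK0)
  rw [key, abs_le]
  constructor <;> push_cast <;> omega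

omit hb in
lemma card_bad (N K r : ℕ) (hK : 0 < K) :
    ((range N).filter fun n => K ≤ n % K + r).card ≤ (N / K + 1) * r := by
  by_cases hr : K ≤ r
  · calc ((range N).filter fun n => K ≤ n % K + r).card ≤ N := by
          simpa using Finset.card_filter_le (range N) _
      _ ≤ (N / K + 1) * r := by
          have hd := Nat.div_add_mod N K
          have hm : N % K < K := Nat.mod_lt _ hK
          have e : (N / K + 1) * K = K * (N / K) + K := by ring
          have h2 : (N / K + 1) * K ≤ (N / K + 1) * r := Nat.mul_le_mul_left _ hr
          omega
  · push_neg at hr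
    have hcard : ((range N).filter fun n => K ≤ n % K + r).card
        ≤ ((range (N / K + 1)) ×ˢ (range r)).card := by
      apply Finset.card_le_card_of_injOn (fun n => (n / K, n % K - (K - r)))
      · intro n hn
        obtain ⟨hn1, hn2⟩ := Finset.mem_filter.mp hn
        have hnN := Finset.mem_range.mp hn1
        have h1 : n / K ≤ N / K := Nat.div_le_div_right (le_of_lt hnN)
        have h2 : n % K < K := Nat.mod_lt _ hK
        simp only [Finset.mem_coe, Finset.mem_product, Finset.mem_range]
        omega
      · intro n1 hn1 n2 hn2 heq
        obtain ⟨-, hc1⟩ := Finset.mem_filter.mp hn1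
        obtain ⟨-, hc2⟩ := Finset.mem_filter.mp hn2
        have m1 : n1 % K < K := Nat.mod_lt _ hK
        have m2 : n2 % K < K := Nat.mod_lt _ hK
        have q1 := Nat.div_add_mod n1 K
        have q2 := Nat.div_add_mod n2 K
        have he1 : n1 / K = n2 / K := congrArg Prod.fst heq
        have he2 : n1 % K - (K - r) = n2 % K - (K - r) := congrArg Prod.snd heq
        have hmm : n1 % K = n2 % K := by omega
        rw [he1, hmm] at q1
        omega
    simpa [Finset.card_product] using hcard

variable (μ : ℕ → ℤ → ℝ)
    (hμ : ∀ (r : ℕ) (d : ℤ),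
      Tendsto (fun N : ℕ =>
        (((Finset.range N).filter fun n => delta b r n = d).card : ℝ) / N)
        atTop (𝓝 (μ r d)))
include hμ

lemma mu_nonneg_s14 (r : ℕ) (d : ℤ) : 0 ≤ μ r d :=
  ge_of_tendsto (hμ r d) (Eventually.of_forall fun N => by positivity)

lemma sum_mu_le_one (r : ℕ) (S : Finset ℤ) : ∑ d ∈ S, μ r d ≤ 1 := by
  have t : Tendsto (fun N : ℕ => ∑ d ∈ S,
      (((range N).filter fun n => delta b r n = d).card : ℝ) / N) atTop
      (𝓝 (∑ d ∈ S, μ r d)) :=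
    tendsto_finset_sum _ fun d _ => hμ r d
  refine le_of_tendsto t (eventually_atTop.mpr ⟨1, fun N hN => ?_⟩)
  have hcard : ∑ d ∈ S, (((range N).filter fun n => delta b r n = d).card : ℝ) ≤ N := by
    rw [← Nat.cast_sum, ← card_fiber]
    exact_mod_cast (Finset.card_filter_le _ _).trans (le_of_eq (Finset.card_range N))
  rw [← Finset.sum_div]
  rw [div_le_one (by exact_mod_cast hN)]
  exact hcard

lemma summable_mu_s14 (r : ℕ) : Summable (μ r) :=
  summable_of_sum_le (fun d => mu_nonneg_s14 hb μ hμ r d) (sum_mu_le_one hb μ hμ r)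

lemma mu_decomp {K : ℕ} (hK : 0 < K) (r : ℕ) (f : ℕ → ℕ) (g : ℕ → ℤ)
    (hfg : ∀ c < K, ∀ q, delta b r (K * q + c) = delta b (f c) q + g c) (d : ℤ) :
    μ r d = (1 / K : ℝ) * ∑ c ∈ range K, μ (f c) (d - g c) := by
  have tK : Tendsto (fun Q : ℕ => K * Q) atTop atTop :=
    tendsto_atTop_mono (fun Q => Nat.le_mul_of_pos_left Q hK) tendsto_id
  have t1 : Tendsto (fun Q : ℕ =>
      (((range (K * Q)).filter fun n => delta b r n = d).card : ℝ) / (K * Q : ℕ))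
      atTop (𝓝 (μ r d)) := (hμ r d).comp tK
  have eq1 : ∀ Q : ℕ,
      (((range (K * Q)).filter fun n => delta b r n = d).card : ℝ) / (K * Q : ℕ)
      = (1 / K : ℝ) * ∑ c ∈ range K,
          (((range Q).filter fun q => delta b (f c) q = d - g c).card : ℝ) / Q := by
    intro Q
    rw [card_decomp K Q (fun n => delta b r n = d)]
    have hinner : ∀ c ∈ range K,
        ((range Q).filter fun q => delta b r (K * q + c) = d)
          = ((range Q).filter fun q => delta b (f c) q = d - g c) := by
      intro c hc
      apply Finset.filter_congr
      intro q _
      rw [hfg c (Finset.mem_range.mp hc) q, eq_sub_iff_add_eq]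
    rw [Finset.sum_congr rfl fun c hc => by rw [hinner c hc]]
    push_cast
    rw [Finset.sum_div, Finset.mul_sum]
    refine Finset.sum_congr rfl fun c _ => ?_
    ring
  rw [funext eq1] at t1
  have t2 : Tendsto (fun Q : ℕ => (1 / K : ℝ) * ∑ c ∈ range K,
      (((range Q).filter fun q => delta b (f c) q = d - g c).card : ℝ) / Q)
      atTop (𝓝 ((1 / K : ℝ) * ∑ c ∈ range K, μ (f c) (d - g c))) :=
    (tendsto_finset_sum _ fun c _ => hμ (f c) (d - g c)).const_mul _
  exact tendsto_nhds_unique t1 t2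

lemma tsum_mu_eq_one (r : ℕ) : ∑' d : ℤ, μ r d = 1 := by
  have hsummable := summable_mu_s14 hb μ hμ r
  apply le_antisymm
  · exact Summable.tsum_le_of_sum_le hsummable (sum_mu_le_one hb μ hμ r)
  · -- lower bound via tightness
    have key : ∀ j : ℕ, 1 - (r : ℝ) / (b ^ j) ≤ ∑' d : ℤ, μ r d := by
      intro j
      set S : Finset ℤ := Finset.Icc (-(((b - 1) * j : ℕ) : ℤ)) (((b - 1) * j : ℕ) : ℤ) with hS
      have hK0 : 0 < b ^ j := pow_pos (by omega) _
      have hlow : ∀ N : ℕ, (N : ℝ) * (1 - (r : ℝ) / (b ^ j)) - r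
          ≤ ∑ d ∈ S, (((range N).filter fun n => delta b r n = d).card : ℝ) := by
        intro N
        have hsub : range N ⊆ ((range N).filter fun n => delta b r n ∈ S)
            ∪ ((range N).filter fun n => b ^ j ≤ n % b ^ j + r) := by
          intro n hn
          by_cases hcase : n % b ^ j + r < b ^ j
          · apply Finset.mem_union_left
            refine Finset.mem_filter.mpr ⟨hn, ?_⟩
            have := abs_delta_le hb r n j hcase
            rw [hS, Finset.mem_Icc]
            constructor <;> [linarith [neg_abs_le (delta b r n)]; linarith [le_abs_self (delta b r n)]]
          · exact Finset.mem_union_right _ (Finset.mem_filter.mpr ⟨hn, by omega⟩)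
        have hcount : (N : ℝ) ≤
            (∑ d ∈ S, (((range N).filter fun n => delta b r n = d).card : ℝ))
              + ((N / b ^ j + 1) * r : ℕ) := by
          have h1 : N ≤ ((range N).filter fun n => delta b r n ∈ S).card
              + ((range N).filter fun n => b ^ j ≤ n % b ^ j + r).card := by
            calc N = (range N).card := (Finset.card_range N).symm
              _ ≤ _ := le_trans (Finset.card_le_card hsub) (Finset.card_union_le _ _)
          have h2 := card_bad N (b ^ j) r hK0
          rw [card_fiber] at h1
          have := le_trans h1 (by omega :
            ((∑ d ∈ S, ((range N).filter fun n => delta b r n = d).card) +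
              ((range N).filter fun n => b ^ j ≤ n % b ^ j + r).card)
            ≤ (∑ d ∈ S, ((range N).filter fun n => delta b r n = d).card) + (N / b ^ j + 1) * r)
          exact_mod_cast this
        have hdivr : (((N / b ^ j + 1) * r : ℕ) : ℝ) ≤ (N : ℝ) * r / (b ^ j) + r := by
          have h1 : ((N / b ^ j : ℕ) : ℝ) ≤ (N : ℝ) / ((b : ℝ) ^ j) := by
            rw [← Nat.cast_pow]; exact Nat.cast_div_le
          have h2 : ((N / b ^ j : ℕ) : ℝ) * r ≤ (N : ℝ) / ((b : ℝ) ^ j) * r :=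
            mul_le_mul_of_nonneg_right h1 (by positivity)
          rw [div_mul_eq_mul_div] at h2
          push_cast
          rw [add_mul, one_mul]
          linarith [h2]
        have e : (N : ℝ) * ((r : ℝ) / ((b:ℝ) ^ j)) = (N : ℝ) * r / ((b:ℝ) ^ j) := by ring
        nlinarith [hcount, hdivr, e]
      -- divide by N and take limits
      have tS : Tendsto (fun N : ℕ => ∑ d ∈ S,
          (((range N).filter fun n => delta b r n = d).card : ℝ) / N) atTop
          (𝓝 (∑ d ∈ S, μ r d)) := tendsto_finset_sum _ fun d _ => hμ r d
      have tR : Tendsto (fun N : ℕ => (1 - (r : ℝ) / (b ^ j)) - r / N) atTop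
          (𝓝 (1 - (r : ℝ) / (b ^ j))) := by
        have h0 : Tendsto (fun N : ℕ => (r : ℝ) / N) atTop (𝓝 0) :=
          tendsto_const_div_atTop_nhds_zero_nat _
        simpa using (tendsto_const_nhds (x := (1 - (r : ℝ) / (b ^ j)))).sub h0
      have hle : 1 - (r : ℝ) / (b ^ j) ≤ ∑ d ∈ S, μ r d := by
        refine le_of_tendsto_of_tendsto tR tS (eventually_atTop.mpr ⟨1, fun N hN => ?_⟩)
        have hN0 : (0 : ℝ) < N := by exact_mod_cast hN
        have hl := hlow N
        dsimp only
        rw [← Finset.sum_div, le_div_iff₀ hN0]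
        have e : ((1 - (r:ℝ) / (b ^ j)) - (r:ℝ)/N) * N = (N:ℝ) * (1 - (r:ℝ)/(b ^ j)) - r := by
          field_simp
        rw [e]
        exact hl
      exact le_trans hle (Summable.sum_le_tsum S (fun d _ => mu_nonneg_s14 hb μ hμ r d) hsummable)
    have tj : Tendsto (fun j : ℕ => 1 - (r : ℝ) / (b ^ j)) atTop (𝓝 1) := by
      have hb1 : (1 : ℝ) < b := by exact_mod_cast hb
      have : Tendsto (fun j : ℕ => (r : ℝ) / (b ^ j)) atTop (𝓝 0) := by
        simp only [div_eq_mul_inv, ← inv_pow]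
        have := tendsto_pow_atTop_nhds_zero_of_lt_one
          (by positivity : (0:ℝ) ≤ ((b:ℝ))⁻¹) (by
            rw [inv_lt_one_iff₀]; right; exact hb1)
        simpa using this.const_mul (r : ℝ)
      simpa using (tendsto_const_nhds (x := (1:ℝ))).sub this
    exact le_of_tendsto tj (Eventually.of_forall key)

variable (V : ℕ → ℝ)
    (hV : ∀ r : ℕ, HasSum (fun d : ℤ => (d : ℝ) ^ 2 * μ r d) (V r))
include hV

lemma summable_sq (r : ℕ) : Summable (fun d : ℤ => (d : ℝ) ^ 2 * μ r d) := (hV r).summable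

lemma summable_lin (r : ℕ) : Summable (fun d : ℤ => (d : ℝ) * μ r d) := by
  have habs : Summable (fun d : ℤ => |(d : ℝ) * μ r d|) := by
    refine Summable.of_nonneg_of_le (fun d => abs_nonneg _) (fun d => ?_)
      ((summable_mu_s14 hb μ hμ r).add (summable_sq hb μ hμ V hV r))
    have h0 := mu_nonneg_s14 hb μ hμ r d
    rw [abs_mul, abs_of_nonneg h0]
    have h1 : |(d : ℝ)| ≤ 1 + (d : ℝ) ^ 2 := by
      nlinarith [sq_abs (d:ℝ), abs_nonneg (d:ℝ), sq_nonneg (|(d:ℝ)| - 1)]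
    nlinarith [h1, h0]
  exact habs.of_abs

lemma summable_lin_shift (r : ℕ) (c : ℤ) :
    Summable (fun d : ℤ => (d : ℝ) * μ r (d - c)) := by
  rw [← (Equiv.addRight c).summable_iff]
  have : ∀ e : ℤ, (fun d : ℤ => (d : ℝ) * μ r (d - c)) ((Equiv.addRight c) e)
      = (e : ℝ) * μ r e + (c : ℝ) * μ r e := by
    intro e
    simp only [Equiv.coe_addRight, add_sub_cancel_right]
    push_cast; ring
  exact ((summable_lin hb μ hμ V hV r).add
    ((summable_mu_s14 hb μ hμ r).mul_left _)).congr (fun e => (this e).symm)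

lemma summable_sq_shift (r : ℕ) (c : ℤ) :
    Summable (fun d : ℤ => (d : ℝ) ^ 2 * μ r (d - c)) := by
  rw [← (Equiv.addRight c).summable_iff]
  have : ∀ e : ℤ, (fun d : ℤ => (d : ℝ) ^ 2 * μ r (d - c)) ((Equiv.addRight c) e)
      = (e : ℝ) ^ 2 * μ r e + (2 * c : ℝ) * ((e : ℝ) * μ r e) + (c : ℝ) ^ 2 * μ r e := by
    intro e
    simp only [Equiv.coe_addRight, add_sub_cancel_right]
    push_cast; ring
  exact (((summable_sq hb μ hμ V hV r).add
    ((summable_lin hb μ hμ V hV r).mul_left _)).add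
    ((summable_mu_s14 hb μ hμ r).mul_left _)).congr (fun e => (this e).symm)

lemma tsum_lin_shift (r : ℕ) (c : ℤ) :
    ∑' d : ℤ, (d : ℝ) * μ r (d - c) = Emom μ r + c := by
  rw [← Equiv.tsum_eq (Equiv.addRight c) (fun d : ℤ => (d : ℝ) * μ r (d - c))]
  have he : ∀ e : ℤ, (fun d : ℤ => (d : ℝ) * μ r (d - c)) ((Equiv.addRight c) e)
      = (e : ℝ) * μ r e + (c : ℝ) * μ r e := by
    intro e
    simp only [Equiv.coe_addRight, add_sub_cancel_right]
    push_cast; ring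
  rw [tsum_congr he, Summable.tsum_add (summable_lin hb μ hμ V hV r)
    ((summable_mu_s14 hb μ hμ r).mul_left _), tsum_mul_left, tsum_mu_eq_one hb μ hμ r]
  simp [Emom]

lemma tsum_sq_shift (r : ℕ) (c : ℤ) :
    ∑' d : ℤ, (d : ℝ) ^ 2 * μ r (d - c) = V r + 2 * c * Emom μ r + (c : ℝ) ^ 2 := by
  rw [← Equiv.tsum_eq (Equiv.addRight c) (fun d : ℤ => (d : ℝ) ^ 2 * μ r (d - c))]
  have he : ∀ e : ℤ, (fun d : ℤ => (d : ℝ) ^ 2 * μ r (d - c)) ((Equiv.addRight c) e)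
      = (e : ℝ) ^ 2 * μ r e + (2 * c : ℝ) * ((e : ℝ) * μ r e) + (c : ℝ) ^ 2 * μ r e := by
    intro e
    simp only [Equiv.coe_addRight, add_sub_cancel_right]
    push_cast; ring
  rw [tsum_congr he,
    Summable.tsum_add ((summable_sq hb μ hμ V hV r).add ((summable_lin hb μ hμ V hV r).mul_left _))
      ((summable_mu_s14 hb μ hμ r).mul_left _),
    Summable.tsum_add (summable_sq hb μ hμ V hV r) ((summable_lin hb μ hμ V hV r).mul_left _),
    tsum_mul_left, tsum_mul_left, tsum_mu_eq_one hb μ hμ r, (hV r).tsum_eq]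
  simp only [Emom]
  ring

lemma E_zero_s14 : Emom μ 0 = 0 := by
  have hd : ∀ n : ℕ, delta b 0 n = 0 := by intro n; unfold delta; simp
  have hzero : ∀ d : ℤ, d ≠ 0 → μ 0 d = 0 := by
    intro d hdne
    refine tendsto_nhds_unique (hμ 0 d) ?_
    have : ∀ N : ℕ, (((range N).filter fun n => delta b 0 n = d).card : ℝ) / N = 0 := by
      intro N
      have : ((range N).filter fun n => delta b 0 n = d) = ∅ := by
        apply Finset.filter_false_of_mem
        intro n _
        rw [hd n]
        exact fun h => hdne h.symm
      rw [this]; simp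
    rw [funext this]
    exact tendsto_const_nhds
  have : ∀ d : ℤ, (d : ℝ) * μ 0 d = 0 := by
    intro d
    by_cases h : d = 0
    · rw [h]; simp
    · rw [hzero d h]; ring
  rw [Emom, tsum_congr this, tsum_zero]

lemma E_rec_s14 {a : ℕ} (ha : a < b) (rh : ℕ) :
    (b : ℝ) * Emom μ (b * rh + a) = ((b : ℝ) - a) * Emom μ rh + (a : ℝ) * Emom μ (rh + 1) := by
  have hb0 : (0 : ℝ) < b := by positivity
  classical
  set f : ℕ → ℕ := fun c => if c + a < b then rh else rh + 1 with hf
  set g : ℕ → ℤ := fun c => if c + a < b then (a : ℤ) else (a : ℤ) - b with hg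
  have hfg : ∀ c < b, ∀ q, delta b (b * rh + a) (b * q + c) = delta b (f c) q + g c := by
    intro c hc q
    rw [delta_digit hb ha rh q hc, hf, hg]
    by_cases h : c + a < b
    · simp [h]
    · simp [h]
  have hdec := mu_decomp hb μ hμ (by omega : 0 < b) (b * rh + a) f g hfg
  have hE : Emom μ (b * rh + a) = ∑' d : ℤ, (d : ℝ) * ((1 / b : ℝ) * ∑ c ∈ range b, μ (f c) (d - g c)) := by
    rw [Emom]; exact tsum_congr fun d => by rw [hdec d]
  have step : ∀ d : ℤ, (d : ℝ) * ((1 / b : ℝ) * ∑ c ∈ range b, μ (f c) (d - g c))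
      = (1 / b : ℝ) * ∑ c ∈ range b, (d : ℝ) * μ (f c) (d - g c) := by
    intro d
    rw [Finset.mul_sum, Finset.mul_sum, Finset.mul_sum]
    exact Finset.sum_congr rfl fun c _ => by ring
  have hE2 : Emom μ (b * rh + a)
      = (1 / b : ℝ) * ∑ c ∈ range b, ∑' d : ℤ, (d : ℝ) * μ (f c) (d - g c) := by
    rw [hE, tsum_congr step, tsum_mul_left,
      Summable.tsum_finsetSum (fun c _ => summable_lin_shift hb μ hμ V hV (f c) (g c))]
  have hval : ∀ c ∈ range b, ∑' d : ℤ, (d : ℝ) * μ (f c) (d - g c)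
      = Emom μ (f c) + ((g c : ℤ) : ℝ) :=
    fun c _ => tsum_lin_shift hb μ hμ V hV (f c) (g c)
  rw [hE2, Finset.sum_congr rfl hval]
  have h1 : (range b).filter (fun c => c + a < b) = range (b - a) := by
    ext c; simp only [Finset.mem_filter, Finset.mem_range]; omega
  have h2 : (range b).filter (fun c => ¬ (c + a < b)) = Finset.Ico (b - a) b := by
    ext c; simp only [Finset.mem_filter, Finset.mem_range, Finset.mem_Ico]; omega
  have split : ∑ c ∈ range b, (Emom μ (f c) + ((g c : ℤ) : ℝ))
      = ((b - a : ℕ) : ℝ) * (Emom μ rh + (a : ℝ))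
        + (a : ℝ) * (Emom μ (rh + 1) + ((a : ℝ) - b)) := by
    rw [← Finset.sum_filter_add_sum_filter_not (range b) (fun c => c + a < b), h1, h2]
    have e1 : ∀ c ∈ range (b - a), Emom μ (f c) + ((g c : ℤ) : ℝ) = Emom μ rh + (a : ℝ) := by
      intro c hc
      have hlt : c + a < b := by have := Finset.mem_range.mp hc; omega
      simp only [hf, hg, if_pos hlt]
      push_cast; ring
    have e2 : ∀ c ∈ Finset.Ico (b - a) b, Emom μ (f c) + ((g c : ℤ) : ℝ)
        = Emom μ (rh + 1) + ((a : ℝ) - b) := by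
      intro c hc
      have hge : ¬ (c + a < b) := by have := Finset.mem_Ico.mp hc; omega
      simp only [hf, hg, if_neg hge]
      push_cast; ring
    rw [Finset.sum_congr rfl e1, Finset.sum_congr rfl e2, Finset.sum_const, Finset.sum_const,
      Finset.card_range, Nat.card_Ico, nsmul_eq_mul, nsmul_eq_mul]
    have : b - (b - a) = a := by omega
    rw [this]
  rw [split]
  have hba : ((b - a : ℕ) : ℝ) = (b : ℝ) - a := by
    push_cast [Nat.cast_sub (le_of_lt ha)]; ring
  rw [hba]
  field_simp
  ring

lemma E_eq_zero (r : ℕ) : Emom μ r = 0 := by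
  induction r using Nat.strong_induction_on with
  | _ r ih =>
    match r, ih with
    | 0, _ => exact E_zero_s14 hb μ hμ V hV
    | 1, _ =>
      have h := E_rec_s14 hb μ hμ V hV (by omega : 1 < b) 0
      simp only [Nat.mul_zero, Nat.zero_add, zero_add, E_zero_s14 hb μ hμ V hV, mul_zero,
        Nat.cast_one, one_mul] at h
      have hb1 : (b : ℝ) - 1 ≠ 0 := by
        have h2 : (2 : ℝ) ≤ b := by exact_mod_cast hb
        intro hc; nlinarith
      have hz : ((b : ℝ) - 1) * Emom μ 1 = 0 := by
        have hmul : ((b : ℝ) - 1) * Emom μ 1 = (b : ℝ) * Emom μ 1 - Emom μ 1 := by ring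
        rw [hmul, h]
        ring
      rcases mul_eq_zero.mp hz with h' | h'
      · exact absurd h' hb1
      · exact h'
    | (r + 2), ih =>
      set rr := r + 2 with hrr
      have hpos : 1 ≤ rr := by omega
      set a := rr % b with haa
      set rh := rr / b with hrh
      have ha : a < b := Nat.mod_lt _ (by omega)
      have hdm : rr = b * rh + a := by rw [haa, hrh]; exact (Nat.div_add_mod rr b).symm
      have hrhlt : rh < rr := Nat.div_lt_self (by omega) (by omega)
      have h := E_rec_s14 hb μ hμ V hV ha rh
      rw [← hdm] at h
      by_cases ha0 : a = 0
      · -- rr = b * rh, rh ≥ 1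
        have hE1 : Emom μ rh = 0 := ih rh hrhlt
        rw [ha0] at h
        simp only [Nat.cast_zero, sub_zero, zero_mul, add_zero] at h
        rw [hE1, mul_zero] at h
        have hbne : (b : ℝ) ≠ 0 := by positivity
        exact (mul_eq_zero.mp h).resolve_left hbne
      · -- a ≥ 1 : rh + 1 < rr
        have hlt2 : rh + 1 < rr := by
          have h2 : 2 * rh ≤ b * rh := Nat.mul_le_mul_right rh (by omega)
          omega
        have hE1 : Emom μ rh = 0 := ih rh hrhlt
        have hE2 : Emom μ (rh + 1) = 0 := ih (rh + 1) hlt2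
        rw [hE1, hE2, mul_zero, mul_zero, add_zero] at h
        have hbne : (b : ℝ) ≠ 0 := by positivity
        exact (mul_eq_zero.mp h).resolve_left hbne

theorem variance_block_one' (rhat : ℕ) (m : ℕ) (hm : 1 ≤ m) :
    V (b ^ m * rhat + 1) =
      (1 - 1 / (b : ℝ) ^ m) * V rhat + (1 / (b : ℝ) ^ m) * V (rhat + 1) +
        (b : ℝ) - 1 / (b : ℝ) ^ (m - 1) := by
  classical
  have hbR : (0 : ℝ) < b := by positivity
  have hK : 0 < b ^ m := pow_pos (by omega) _
  set K := b ^ m with hKdef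
  set f : ℕ → ℕ := fun c => if c = K - 1 then rhat + 1 else rhat with hf
  set g : ℕ → ℤ := fun c => if c = K - 1 then -(m * ((b : ℤ) - 1)) else delta b 1 c with hg
  have hfg : ∀ c < K, ∀ q, delta b (K * rhat + 1) (K * q + c) = delta b (f c) q + g c := by
    intro c hc q
    rw [hKdef] at hc ⊢
    rw [delta_block hb m rhat q hc, hf, hg]
    by_cases h : c = b ^ m - 1
    · simp only [← hKdef, if_pos (show c = K - 1 from h)]; ring
    · simp only [← hKdef, if_neg (show ¬ c = K - 1 from h)]
  have hdec := mu_decomp hb μ hμ hK (K * rhat + 1) f g hfg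
  have hVr : V (K * rhat + 1) = ∑' d : ℤ, (d : ℝ) ^ 2 * μ (K * rhat + 1) d :=
    (hV (K * rhat + 1)).tsum_eq.symm
  have step : ∀ d : ℤ, (d : ℝ) ^ 2 * μ (K * rhat + 1) d
      = (1 / K : ℝ) * ∑ c ∈ range K, (d : ℝ) ^ 2 * μ (f c) (d - g c) := by
    intro d
    rw [hdec d, Finset.mul_sum, Finset.mul_sum, Finset.mul_sum]
    exact Finset.sum_congr rfl fun c _ => by ring
  have hV2 : V (K * rhat + 1)
      = (1 / K : ℝ) * ∑ c ∈ range K, ∑' d : ℤ, (d : ℝ) ^ 2 * μ (f c) (d - g c) := by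
    rw [hVr, tsum_congr step, tsum_mul_left,
      Summable.tsum_finsetSum (fun c _ => summable_sq_shift hb μ hμ V hV (f c) (g c))]
  have hval : ∀ c ∈ range K, ∑' d : ℤ, (d : ℝ) ^ 2 * μ (f c) (d - g c)
      = V (f c) + ((g c : ℤ) : ℝ) ^ 2 := by
    intro c _
    rw [tsum_sq_shift hb μ hμ V hV (f c) (g c), E_eq_zero hb μ hμ V hV (f c)]
    ring
  rw [hV2, Finset.sum_congr rfl hval]
  have hK1 : K = (K - 1) + 1 := by omega
  rw [hK1, Finset.sum_range_succ, ← hK1]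
  have hlast : V (f (K - 1)) + ((g (K - 1) : ℤ) : ℝ) ^ 2
      = V (rhat + 1) + ((m : ℝ) * ((b : ℝ) - 1)) ^ 2 := by
    simp only [hf, hg, if_pos rfl]
    push_cast; ring
  have hrest : ∀ c ∈ range (K - 1), V (f c) + ((g c : ℤ) : ℝ) ^ 2
      = V rhat + ((delta b 1 c : ℤ) : ℝ) ^ 2 := by
    intro c hc
    have hne : c ≠ K - 1 := by have := Finset.mem_range.mp hc; omega
    simp only [hf, hg, if_neg hne]
  rw [Finset.sum_congr rfl hrest, hlast, Finset.sum_add_distrib, Finset.sum_const,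
    Finset.card_range, nsmul_eq_mul]
  have hsq : ∑ c ∈ range (K - 1), ((delta b 1 c : ℤ) : ℝ) ^ 2
      = (b : ℝ) ^ (m + 1) - b - ((m : ℝ) * ((b : ℝ) - 1)) ^ 2 := by
    have := Spart hb m
    have hcast : ((∑ c ∈ range (b ^ m - 1), (delta b 1 c) ^ 2 : ℤ) : ℝ)
        = ∑ c ∈ range (b ^ m - 1), ((delta b 1 c : ℤ) : ℝ) ^ 2 := by
      push_cast; rfl
    rw [hKdef, ← hcast, this]
    push_cast; ring
  rw [hsq]
  have hKR : ((K : ℕ) : ℝ) = (b : ℝ) ^ m := by rw [hKdef]; push_cast; ring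
  have hK1R : ((K - 1 : ℕ) : ℝ) = (b : ℝ) ^ m - 1 := by
    rw [Nat.cast_sub (by omega : 1 ≤ K), hKR]; simp
  rw [hKR, hK1R]
  obtain ⟨k, rfl⟩ : ∃ k, m = k + 1 := ⟨m - 1, by omega⟩
  simp only [Nat.add_sub_cancel]
  have hbm : (b : ℝ) ^ (k + 1) ≠ 0 := by positivity
  have hbk : (b : ℝ) ^ k ≠ 0 := by positivity
  field_simp
  ring
end digits

/-- **Lemma (variance with units digit `1` preceded by a block of `0`'s).** For every
`r̂ ∈ ℕ` and `m ≥ 1`,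
`Var(μ^(b^m·r̂+1)) = (1-1/b^m)·Var(μ^(r̂)) + (1/b^m)·Var(μ^(r̂+1)) + b - 1/b^(m-1)`. -/
theorem variance_block_one (b : ℕ) (hb : 2 ≤ b)
    (μ : ℕ → ℤ → ℝ)
    (hμ : ∀ (r : ℕ) (d : ℤ),
      Tendsto (fun N : ℕ =>
        (((Finset.range N).filter fun n => delta b r n = d).card : ℝ) / N)
        atTop (𝓝 (μ r d)))
    (V : ℕ → ℝ)
    (hV : ∀ r : ℕ, HasSum (fun d : ℤ => (d : ℝ) ^ 2 * μ r d) (V r))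
    (rhat : ℕ) (m : ℕ) (hm : 1 ≤ m) :
    V (b ^ m * rhat + 1) =
      (1 - 1 / (b : ℝ) ^ m) * V rhat + (1 / (b : ℝ) ^ m) * V (rhat + 1) +
        (b : ℝ) - 1 / (b : ℝ) ^ (m - 1) := by
  exact variance_block_one' hb μ hμ V hV rhat m hm
end
end
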